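/- arXiv:1206.3539 — 7 statements merged into one kernel-verified Lean document; each statement's English description precedes it below -/
import Mathlib

section
/- Let Y be a Banach space and X a closed subspace that is an ideal in Y. Then there exists a Hahn-Banach extension operator φ : X* → Y* such that for every ε > 0, every finite-dimensional subspace E ⊆ Y and every finite-dimensional subspace F ⊆ X* there exists a linear map T : E → X satisfying (i) Te = e for all e ∈ X ∩ E, (ii) ‖Te‖ ≤ (1+ε)‖e‖ for all e ∈ E, and (iii) (φ f*)(e) = f*(Te) for all e ∈ E and all f* ∈ F. -/
universe u v

open Metric Set

section Defs

variable {Y : Type*} [NormedAddCommGroup Y] [NormedSpace ℝ Y]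

/-- `X` is an ideal in `Y`. -/
def IsIdeal (X : Subspace ℝ Y) : Prop :=
  ∀ ε : ℝ, 0 < ε → ∀ E : Subspace ℝ Y, FiniteDimensional ℝ E →
    ∃ T : E →ₗ[ℝ] X,
      (∀ e : E, (e : Y) ∈ X → ((T e : X) : Y) = (e : Y)) ∧
      (∀ e : E, ‖T e‖ ≤ (1 + ε) * ‖e‖)

/-- `X` is a super-ideal in `Y`. -/
def IsSuperIdeal (X : Subspace ℝ Y) : Prop :=
  ∀ ε : ℝ, 0 < ε → ∀ E : Subspace ℝ Y, FiniteDimensional ℝ E →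
    ∃ T : E →ₗ[ℝ] X,
      (∀ e : E, (e : Y) ∈ X → ((T e : X) : Y) = (e : Y)) ∧
      (∀ e : E, (1 + ε)⁻¹ * ‖e‖ ≤ ‖T e‖ ∧ ‖T e‖ ≤ (1 + ε) * ‖e‖)

/-- `X` is a super u-ideal in `Y`. -/
def IsSuperUIdeal (X : Subspace ℝ Y) : Prop :=
  ∀ ε : ℝ, 0 < ε → ∀ E : Subspace ℝ Y, FiniteDimensional ℝ E →
    ∃ T : E →ₗ[ℝ] X,
      (∀ e : E, (e : Y) ∈ X → ((T e : X) : Y) = (e : Y)) ∧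
      (∀ e : E, (1 + ε)⁻¹ * ‖e‖ ≤ ‖T e‖ ∧ ‖T e‖ ≤ (1 + ε) * ‖e‖) ∧
      (∀ e : E, ‖(e : Y) - (2 : ℝ) • ((T e : X) : Y)‖ ≤ (1 + ε) * ‖e‖)

/-- `φ : X* → Y*` is a Hahn-Banach extension operator. -/
def IsHahnBanachExtensionOperator (X : Subspace ℝ Y)
    (φ : (X →L[ℝ] ℝ) →L[ℝ] (Y →L[ℝ] ℝ)) : Prop :=
  ∀ f : X →L[ℝ] ℝ, (∀ x : X, φ f (x : Y) = f x) ∧ ‖φ f‖ = ‖f‖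

/-- A set of functionals `V ⊆ Y*` is 1-norming for `Y`. -/
def IsOneNorming (V : Set (Y →L[ℝ] ℝ)) : Prop :=
  ∀ y : Y, ‖y‖ = sSup {r : ℝ | ∃ v ∈ V, ‖v‖ ≤ 1 ∧ r = |v y|}

end Defs

section Props

variable (Z : Type*) [NormedAddCommGroup Z] [NormedSpace ℝ Z]

/-- A slice of the closed unit ball of `Z`. -/
def IsSlice (S : Set Z) : Prop :=
  ∃ (f : Z →L[ℝ] ℝ) (ε : ℝ), ‖f‖ = 1 ∧ 0 < ε ∧
    S = {z | z ∈ closedBall (0 : Z) 1 ∧ 1 - ε < f z}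

/-- The local diameter 2 property. -/
def HasLocalDiameterTwoProperty : Prop :=
  ∀ S : Set Z, IsSlice Z S → Metric.diam S = 2

/-- The diameter 2 property. -/
def HasDiameterTwoProperty : Prop :=
  ∀ U : Set Z, U.Nonempty →
    (∃ V : Set Z, @IsOpen (WeakSpace ℝ Z) _ V ∧ U = V ∩ closedBall (0 : Z) 1) →
    Metric.diam U = 2

/-- The strong diameter 2 property. -/
def HasStrongDiameterTwoProperty : Prop :=
  ∀ (n : ℕ), 0 < n → ∀ (S : Fin n → Set Z) (lam : Fin n → ℝ),
    (∀ i, IsSlice Z (S i)) → (∀ i, 0 ≤ lam i) → (∑ i, lam i) = 1 →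
    Metric.diam {z : Z | ∃ x : Fin n → Z, (∀ i, x i ∈ S i) ∧ z = ∑ i, lam i • x i} = 2

/-- The Daugavet property. -/
def HasDaugavetProperty : Prop :=
  ∀ T : Z →L[ℝ] Z, Module.finrank ℝ (LinearMap.range (T : Z →ₗ[ℝ] Z)) = 1 →
    ‖ContinuousLinearMap.id ℝ Z + T‖ = 1 + ‖T‖

end Props

/-- `X` is a Gurariĭ space. -/
def IsGurarii (X : Type*) [NormedAddCommGroup X] [NormedSpace ℝ X] : Prop :=
  ∀ ε : ℝ, 0 < ε →
    ∀ (F : Type) [NormedAddCommGroup F] [NormedSpace ℝ F] [FiniteDimensional ℝ F],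
      ∀ (E : Subspace ℝ F) (TE : E →ₗᵢ[ℝ] X),
        ∃ TF : F →ₗ[ℝ] X,
          (∀ e : E, TF (e : F) = TE e) ∧
          (∀ f : F, (1 + ε)⁻¹ * ‖f‖ ≤ ‖TF f‖ ∧ ‖TF f‖ ≤ (1 + ε) * ‖f‖)

/-- `X` is a Lindenstrauss space: its dual is isometric to some `L¹(μ)`. -/
def IsLindenstrauss (X : Type u) [NormedAddCommGroup X] [NormedSpace ℝ X] : Prop :=
  ∃ (α : Type u) (m : MeasurableSpace α) (μ : @MeasureTheory.Measure α m),
    Nonempty ((X →L[ℝ] ℝ) ≃ₗᵢ[ℝ] MeasureTheory.Lp ℝ 1 μ)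


open Filter Topology

set_option synthInstance.maxHeartbeats 1000000
set_option maxHeartbeats 2000000

def FDsub (Y : Type*) [NormedAddCommGroup Y] [NormedSpace ℝ Y] : Type _ :=
  {E : Subspace ℝ Y // FiniteDimensional ℝ E}

noncomputable instance FDsub.instSemilatticeSup (Y : Type*) [NormedAddCommGroup Y]
    [NormedSpace ℝ Y] : SemilatticeSup (FDsub Y) :=
  Subtype.semilatticeSup fun E F hE hF => by
    exact @Submodule.finiteDimensional_sup ℝ Y _ _ _ E F hE hF

instance FDsub.instNonempty (Y : Type*) [NormedAddCommGroup Y] [NormedSpace ℝ Y] :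
    Nonempty (FDsub Y) := ⟨⟨⊥, inferInstance⟩⟩


section MkPhi

variable {Y : Type*} [NormedAddCommGroup Y] [NormedSpace ℝ Y] (X : Subspace ℝ Y)

/-- Package a compatible family of functionals into a continuous linear map. -/
noncomputable def mkPhi (φf : (X →L[ℝ] ℝ) → (Y →L[ℝ] ℝ))
    (hadd : ∀ f f', φf (f + f') = φf f + φf f')
    (hsmul : ∀ (c : ℝ) f, φf (c • f) = c • φf f)
    (hle : ∀ f, ‖φf f‖ ≤ ‖f‖) : (X →L[ℝ] ℝ) →L[ℝ] (Y →L[ℝ] ℝ) :=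
  LinearMap.mkContinuous
    { toFun := φf
      map_add' := hadd
      map_smul' := hsmul }
    1 (fun f => by rw [one_mul]; exact hle f)

@[simp] lemma mkPhi_apply (φf : (X →L[ℝ] ℝ) → (Y →L[ℝ] ℝ)) (hadd hsmul hle) (f : X →L[ℝ] ℝ) :
    mkPhi X φf hadd hsmul hle f = φf f := rfl

end MkPhi


section QSurj

variable {Y : Type*} [NormedAddCommGroup Y] [NormedSpace ℝ Y] (X : Subspace ℝ Y)
variable (F : Subspace ℝ (X →L[ℝ] ℝ))

/-- Evaluation map `X → F*`. -/
noncomputable def evalQ : X →ₗ[ℝ] Module.Dual ℝ F where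
  toFun x :=
    { toFun := fun f => (f : X →L[ℝ] ℝ) x
      map_add' := fun f g => by simp
      map_smul' := fun c f => by simp }
  map_add' x y := by ext f; simp
  map_smul' c x := by ext f; simp

@[simp] lemma evalQ_apply (x : X) (f : F) : evalQ X F x f = (f : X →L[ℝ] ℝ) x := rfl

lemma evalQ_surjective [FiniteDimensional ℝ F] : Function.Surjective (evalQ X F) := by
  haveI : Module.Free ℝ F := Module.Free.of_divisionRing ℝ F
  haveI : Module.IsReflexive ℝ F := Module.IsReflexive.of_finite_of_free ℝ F
  rw [← LinearMap.range_eq_top]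
  by_contra h
  obtain ⟨φd, hφd0, hφdmap⟩ := Submodule.exists_dual_map_eq_bot_of_lt_top
    (lt_top_iff_ne_top.2 h) inferInstance
  set f₀ : F := (Module.evalEquiv ℝ F).symm φd with hf₀
  have hall : ∀ x : X, (f₀ : X →L[ℝ] ℝ) x = 0 := by
    intro x
    have hx : evalQ X F x ∈ LinearMap.range (evalQ X F) := LinearMap.mem_range_self _ x
    have h0 : φd (evalQ X F x) = 0 := by
      have := Submodule.mem_map_of_mem (f := φd) hx
      rw [hφdmap] at this
      simpa using this
    have := Module.apply_evalEquiv_symm_apply ℝ F (evalQ X F x) φd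
    rw [h0] at this
    simpa [hf₀, -Module.apply_evalEquiv_symm_apply] using this
  have hf00 : f₀ = 0 := by
    apply Subtype.ext
    exact ContinuousLinearMap.ext hall
  apply hφd0
  have := (Module.evalEquiv ℝ F).apply_symm_apply φd
  rw [← this, ← hf₀, hf00, map_zero]

end QSurj


theorem ideal_hahnBanach_extension
    (Y : Type*) [NormedAddCommGroup Y] [NormedSpace ℝ Y] [CompleteSpace Y]
    (X : Subspace ℝ Y) (hXc : IsClosed (X : Set Y)) (hX : IsIdeal X) :
    ∃ φ : (X →L[ℝ] ℝ) →L[ℝ] (Y →L[ℝ] ℝ),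
      IsHahnBanachExtensionOperator X φ ∧
      ∀ ε : ℝ, 0 < ε → ∀ E : Subspace ℝ Y, FiniteDimensional ℝ E →
        ∀ F : Subspace ℝ (X →L[ℝ] ℝ), FiniteDimensional ℝ F →
          ∃ T : E →ₗ[ℝ] X,
            (∀ e : E, (e : Y) ∈ X → ((T e : X) : Y) = (e : Y)) ∧
            (∀ e : E, ‖T e‖ ≤ (1 + ε) * ‖e‖) ∧
            (∀ e : E, ∀ f : X →L[ℝ] ℝ, f ∈ F → φ f (e : Y) = f (T e)) := by
  classical
  -- choose the local maps
  have hTex : ∀ α : FDsub Y × ℕ, ∃ T : α.1.1 →ₗ[ℝ] X,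
      (∀ e : α.1.1, (e : Y) ∈ X → ((T e : X) : Y) = (e : Y)) ∧
      (∀ e : α.1.1, ‖T e‖ ≤ (1 + ((α.2 : ℝ) + 1)⁻¹) * ‖e‖) := by
    intro α
    haveI := α.1.2
    exact hX ((α.2 : ℝ) + 1)⁻¹ (by positivity) α.1.1 α.1.2
  choose T hT1 hT2 using hTex
  set g : (FDsub Y × ℕ) → (X →L[ℝ] ℝ) → Y → ℝ :=
    fun α f y => if h : y ∈ α.1.1 then f (T α ⟨y, h⟩) else 0 with hg
  set U : Ultrafilter (FDsub Y × ℕ) := Ultrafilter.of atTop with hUdef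
  have hU : (U : Filter (FDsub Y × ℕ)) ≤ atTop := Ultrafilter.of_le _
  -- eventual membership
  have hmem : ∀ y : Y, ∀ᶠ α in (U : Filter (FDsub Y × ℕ)), y ∈ α.1.1 := by
    intro y
    have hfd : FiniteDimensional ℝ (Submodule.span ℝ {y}) := inferInstance
    refine hU ((eventually_ge_atTop ((⟨Submodule.span ℝ {y}, hfd⟩ : FDsub Y), 0)).mono ?_)
    rintro ⟨β, n⟩ ⟨h1, h2⟩
    exact h1 (Submodule.mem_span_singleton_self y)
  -- bound on g
  have hgb : ∀ (α : FDsub Y × ℕ) (f : X →L[ℝ] ℝ) (y : Y) (n : ℕ), n ≤ α.2 →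
      |g α f y| ≤ (1 + ((n : ℝ) + 1)⁻¹) * ‖f‖ * ‖y‖ := by
    intro α f y n hn
    rw [hg]
    dsimp only
    split_ifs with h
    · calc |f (T α ⟨y, h⟩)| ≤ ‖f‖ * ‖T α ⟨y, h⟩‖ := f.le_opNorm _
      _ ≤ ‖f‖ * ((1 + ((α.2 : ℝ) + 1)⁻¹) * ‖(⟨y, h⟩ : α.1.1)‖) := by
          exact mul_le_mul_of_nonneg_left (hT2 α _) (norm_nonneg f)
      _ = (1 + ((α.2 : ℝ) + 1)⁻¹) * ‖f‖ * ‖y‖ := by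
          have : ‖(⟨y, h⟩ : α.1.1)‖ = ‖y‖ := rfl
          rw [this]; ring
      _ ≤ (1 + ((n : ℝ) + 1)⁻¹) * ‖f‖ * ‖y‖ := by
          have : ((α.2 : ℝ) + 1)⁻¹ ≤ ((n : ℝ) + 1)⁻¹ := by
            have hcast : (n : ℝ) ≤ (α.2 : ℝ) := Nat.cast_le.2 hn
            apply inv_anti₀ (by positivity) (by linarith)
          have h0 : (0:ℝ) ≤ ‖f‖ * ‖y‖ := by positivity
          nlinarith [norm_nonneg f, norm_nonneg y]
    · simp only [abs_zero]; positivity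
  -- existence of limits
  have hlim : ∀ (f : X →L[ℝ] ℝ) (y : Y), ∃ c : ℝ,
      Tendsto (fun α => g α f y) (U : Filter (FDsub Y × ℕ)) (𝓝 c) := by
    intro f y
    have hIcc : Icc (-(2 * ‖f‖ * ‖y‖)) (2 * ‖f‖ * ‖y‖) ∈ U.map (fun α => g α f y) := by
      refine Ultrafilter.mem_map.2 ?_
      have h0 : ∀ᶠ α in (U : Filter (FDsub Y × ℕ)), 0 ≤ α.2 :=
        Eventually.of_forall fun _ => Nat.zero_le _
      filter_upwards [h0] with α hα
      have := hgb α f y 0 hα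
      simp only [Nat.cast_zero, zero_add, inv_one] at this
      rw [abs_le] at this
      constructor <;> [linarith [this.1]; linarith [this.2]]
    obtain ⟨c, _, hc⟩ := isCompact_Icc.ultrafilter_le_nhds'
      (U.map (fun α => g α f y)) hIcc
    exact ⟨c, hc⟩
  choose φ₀ hφ₀ using hlim
  -- φ₀ is the unique limit
  have huniq : ∀ (f : X →L[ℝ] ℝ) (y : Y) (c : ℝ),
      Tendsto (fun α => g α f y) (U : Filter (FDsub Y × ℕ)) (𝓝 c) → φ₀ f y = c := by
    intro f y c hc
    exact tendsto_nhds_unique (hφ₀ f y) hc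
  -- additivity in y
  have haddy : ∀ (f : X →L[ℝ] ℝ) (y z : Y), φ₀ f (y + z) = φ₀ f y + φ₀ f z := by
    intro f y z
    refine huniq f (y + z) _ ?_
    have hev : ∀ᶠ α in (U : Filter (FDsub Y × ℕ)),
        g α f (y + z) = g α f y + g α f z := by
      filter_upwards [hmem y, hmem z] with α hy hz
      have hyz : y + z ∈ α.1.1 := add_mem hy hz
      rw [hg]
      dsimp only
      rw [dif_pos hy, dif_pos hz, dif_pos hyz]
      have : (⟨y + z, hyz⟩ : α.1.1) = ⟨y, hy⟩ + ⟨z, hz⟩ := rfl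
      rw [this, map_add, map_add]
    exact Tendsto.congr' (hev.mono fun α h => h.symm) ((hφ₀ f y).add (hφ₀ f z))
  have hsmuly : ∀ (f : X →L[ℝ] ℝ) (c : ℝ) (y : Y), φ₀ f (c • y) = c * φ₀ f y := by
    intro f c y
    refine huniq f (c • y) _ ?_
    have hev : ∀ᶠ α in (U : Filter (FDsub Y × ℕ)),
        g α f (c • y) = c * g α f y := by
      filter_upwards [hmem y] with α hy
      have hcy : c • y ∈ α.1.1 := Submodule.smul_mem _ _ hy
      rw [hg]
      dsimp only
      rw [dif_pos hy, dif_pos hcy]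
      have : (⟨c • y, hcy⟩ : α.1.1) = c • ⟨y, hy⟩ := rfl
      rw [this, map_smul, map_smul]
      simp
    exact Tendsto.congr' (hev.mono fun α h => h.symm) ((hφ₀ f y).const_mul c)
  -- additivity in f
  have haddf : ∀ (f f' : X →L[ℝ] ℝ) (y : Y), φ₀ (f + f') y = φ₀ f y + φ₀ f' y := by
    intro f f' y
    refine huniq (f + f') y _ ?_
    have hev : ∀ α, g α (f + f') y = g α f y + g α f' y := by
      intro α
      rw [hg]
      dsimp only
      split_ifs with h
      · simp
      · simp
    exact (funext hev : _) ▸ ((hφ₀ f y).add (hφ₀ f' y))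
  have hsmulf : ∀ (c : ℝ) (f : X →L[ℝ] ℝ) (y : Y), φ₀ (c • f) y = c * φ₀ f y := by
    intro c f y
    refine huniq (c • f) y _ ?_
    have hev : ∀ α, g α (c • f) y = c * g α f y := by
      intro α
      rw [hg]
      dsimp only
      split_ifs with h
      · simp
      · simp
    exact (funext hev : _) ▸ ((hφ₀ f y).const_mul c)
  -- extension property
  have hext : ∀ (f : X →L[ℝ] ℝ) (x : X), φ₀ f (x : Y) = f x := by
    intro f x
    refine huniq f (x : Y) _ ?_
    have hev : ∀ᶠ α in (U : Filter (FDsub Y × ℕ)), g α f (x : Y) = f x := by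
      filter_upwards [hmem (x : Y)] with α hx
      rw [hg]
      dsimp only
      rw [dif_pos hx]
      congr 1
      exact Subtype.ext (hT1 α ⟨(x : Y), hx⟩ x.2)
    exact Tendsto.congr' (hev.mono fun α h => h.symm) tendsto_const_nhds
  -- norm bound
  have hnorm : ∀ (f : X →L[ℝ] ℝ) (y : Y), |φ₀ f y| ≤ ‖f‖ * ‖y‖ := by
    intro f y
    have hn : ∀ n : ℕ, |φ₀ f y| ≤ (1 + ((n : ℝ) + 1)⁻¹) * ‖f‖ * ‖y‖ := by
      intro n
      have hev : ∀ᶠ α in (U : Filter (FDsub Y × ℕ)),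
          |g α f y| ≤ (1 + ((n : ℝ) + 1)⁻¹) * ‖f‖ * ‖y‖ := by
        refine hU ((eventually_ge_atTop ((⟨⊥, inferInstance⟩ : FDsub Y), n)).mono ?_)
        rintro α ⟨-, h2⟩
        exact hgb α f y n h2
      exact le_of_tendsto ((hφ₀ f y).abs) hev
    have hlim2 : Tendsto (fun n : ℕ => (1 + ((n : ℝ) + 1)⁻¹) * ‖f‖ * ‖y‖) atTop
        (𝓝 (‖f‖ * ‖y‖)) := by
      have h1 : Tendsto (fun n : ℕ => ((n : ℝ) + 1)⁻¹) atTop (𝓝 0) :=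
        tendsto_one_div_add_atTop_nhds_zero_nat.congr (fun n => by rw [one_div])
      have := ((h1.const_add 1).mul_const ‖f‖).mul_const ‖y‖
      simpa using this
    exact ge_of_tendsto hlim2 (Eventually.of_forall hn)
  -- package as continuous linear map
  let φf : (X →L[ℝ] ℝ) → (Y →L[ℝ] ℝ) := fun f =>
    LinearMap.mkContinuous
      { toFun := φ₀ f
        map_add' := haddy f
        map_smul' := fun c y => hsmuly f c y }
      ‖f‖ (fun y => by simpa [Real.norm_eq_abs] using hnorm f y)
  have hφf_apply : ∀ f y, φf f y = φ₀ f y := fun f y => rfl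
  have hφf_le : ∀ f, ‖φf f‖ ≤ ‖f‖ := fun f =>
    LinearMap.mkContinuous_norm_le _ (norm_nonneg f) _
  have hφfadd : ∀ f f', φf (f + f') = φf f + φf f' := by
    intro f f'
    refine ContinuousLinearMap.ext fun y => ?_
    simp only [hφf_apply, ContinuousLinearMap.add_apply]
    exact haddf f f' y
  have hφfsmul : ∀ (c : ℝ) f, φf (c • f) = c • φf f := by
    intro c f
    refine ContinuousLinearMap.ext fun y => ?_
    simp only [hφf_apply, ContinuousLinearMap.smul_apply, smul_eq_mul]
    exact hsmulf c f y
  let φ : (X →L[ℝ] ℝ) →L[ℝ] (Y →L[ℝ] ℝ) := mkPhi X φf hφfadd hφfsmul hφf_le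
  have hφ_apply : ∀ f y, φ f y = φ₀ f y := fun f y => rfl
  have hφ_norm : ∀ f, ‖φ f‖ ≤ ‖f‖ := fun f => hφf_le f
  have hHB : IsHahnBanachExtensionOperator X φ := by
    intro f
    refine ⟨fun x => by rw [hφ_apply]; exact hext f x, le_antisymm (hφ_norm f) ?_⟩
    refine f.opNorm_le_bound (norm_nonneg _) fun x => ?_
    calc ‖f x‖ = ‖φ f (x : Y)‖ := by rw [hφ_apply]; rw [hext f x]
    _ ≤ ‖φ f‖ * ‖(x : Y)‖ := (φ f).le_opNorm _
    _ = ‖φ f‖ * ‖x‖ := rfl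
  -- the main local statement
  have hmain : ∀ ε : ℝ, 0 < ε → ∀ E : Subspace ℝ Y, FiniteDimensional ℝ E →
      ∀ F : Subspace ℝ (X →L[ℝ] ℝ), FiniteDimensional ℝ F →
        ∃ Tf : E →ₗ[ℝ] X,
          (∀ e : E, (e : Y) ∈ X → ((Tf e : X) : Y) = (e : Y)) ∧
          (∀ e : E, ‖Tf e‖ ≤ (1 + ε) * ‖e‖) ∧
          (∀ e : E, ∀ f : X →L[ℝ] ℝ, f ∈ F → φ f (e : Y) = f (Tf e)) := by
    intro ε hε E hE F hF
    haveI := hE; haveI := hF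
    haveI : Module.Free ℝ F := Module.Free.of_divisionRing ℝ F
    haveI : Module.Free ℝ (Module.Dual ℝ F) := Module.Free.of_divisionRing ℝ _
    obtain ⟨R₀, hR₀⟩ := (evalQ X F).exists_rightInverse_of_surjective
      (LinearMap.range_eq_top.2 (evalQ_surjective X F))
    have hQR : ∀ (d : Module.Dual ℝ F) (f : F), (f : X →L[ℝ] ℝ) (R₀ d) = d f := by
      intro d f
      have h1 := LinearMap.congr_fun hR₀ d
      have h2 := LinearMap.congr_fun h1 f
      simpa using h2
    -- bases and constants
    set m := Module.finrank ℝ E with hm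
    set k := Module.finrank ℝ F with hk
    let c : Module.Basis (Fin m) ℝ E := Module.finBasis ℝ E
    let b : Module.Basis (Fin k) ℝ F := Module.finBasis ℝ F
    let xs : Fin k → X := fun j => R₀ (b.coord j)
    let cc : Fin m → (E →L[ℝ] ℝ) := fun i => LinearMap.toContinuousLinearMap (c.coord i)
    have hcc : ∀ (e : E) (i : Fin m), |c.repr e i| ≤ ‖cc i‖ * ‖e‖ := by
      intro e i
      have h1 := (cc i).le_opNorm e
      have h2 : cc i e = c.repr e i := by
        simp [cc, Module.Basis.coord_apply]
      rw [h2] at h1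
      simpa [Real.norm_eq_abs] using h1
    set C : ℝ := (∑ i, ‖cc i‖) * (∑ j, ‖xs j‖) with hC
    have hC0 : 0 ≤ C := by positivity
    set δ : ℝ := (ε / 2) / (C + 1) with hδ
    have hδ0 : 0 < δ := by positivity
    have hCδ : C * δ ≤ ε / 2 := by
      rw [hδ]
      rw [div_eq_mul_inv]
      have h1 : C * ((ε / 2) * (C + 1)⁻¹) = (ε / 2) * (C * (C + 1)⁻¹) := by ring
      rw [h1]
      have h2 : C * (C + 1)⁻¹ ≤ 1 := by
        rw [mul_inv_le_iff₀ (by linarith)]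
        linarith
      nlinarith
    obtain ⟨N, hNge⟩ := exists_nat_ge (2 / ε)
    have hN : ((N : ℝ) + 1)⁻¹ ≤ ε / 2 := by
      have h1 : (0:ℝ) < 2 / ε := by positivity
      have h2 : 2 / ε ≤ (N : ℝ) + 1 := by linarith
      calc ((N : ℝ) + 1)⁻¹ ≤ (2 / ε)⁻¹ := inv_anti₀ h1 h2
      _ = ε / 2 := by rw [inv_div]
    -- pick a good index α
    have hev : ∀ᶠ α in (U : Filter (FDsub Y × ℕ)),
        ((⟨E, hE⟩ : FDsub Y), N) ≤ α ∧ ∀ i : Fin m, ∀ j : Fin k,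
          |g α ((b j : F) : X →L[ℝ] ℝ) ((c i : E) : Y) -
            φ₀ ((b j : F) : X →L[ℝ] ℝ) ((c i : E) : Y)| < δ := by
      have hge : ∀ᶠ α in (U : Filter (FDsub Y × ℕ)), ((⟨E, hE⟩ : FDsub Y), N) ≤ α :=
        hU (eventually_ge_atTop _)
      refine hge.and ?_
      refine eventually_all.2 ?_
      intro i
      refine eventually_all.2 ?_
      intro j
      exact (hφ₀ ((b j : F) : X →L[ℝ] ℝ) ((c i : E) : Y)).eventually
        (eventually_abs_sub_lt _ hδ0)
    obtain ⟨α, hα1, hα2⟩ := @Filter.Eventually.exists _ _ _ U.neBot hev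
    have hEα : E ≤ α.1.1 := hα1.1
    have hNα : N ≤ α.2 := hα1.2
    let inc : E →ₗ[ℝ] α.1.1 := Submodule.inclusion hEα
    have hinc : ∀ e : E, ((inc e : α.1.1) : Y) = (e : Y) := fun e => rfl
    let T' : E →ₗ[ℝ] X := (T α).comp inc
    -- the defect functional
    let D : E →ₗ[ℝ] Module.Dual ℝ F :=
      { toFun := fun e =>
          { toFun := fun f => φ₀ ((f : F) : X →L[ℝ] ℝ) (e : Y) - ((f : F) : X →L[ℝ] ℝ) (T' e)
            map_add' := by
              intro f f'
              simp only [Submodule.coe_add, ContinuousLinearMap.add_apply, haddf]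
              ring
            map_smul' := by
              intro r f
              simp only [Submodule.coe_smul, ContinuousLinearMap.smul_apply, hsmulf,
                RingHom.id_apply, smul_eq_mul]
              ring }
        map_add' := by
          intro e e'
          ext f
          simp only [LinearMap.coe_mk, AddHom.coe_mk, LinearMap.add_apply, map_add,
            Submodule.coe_add, haddy]
          ring
        map_smul' := by
          intro r e
          ext f
          simp only [LinearMap.coe_mk, AddHom.coe_mk, LinearMap.smul_apply, map_smul,
            Submodule.coe_smul, hsmuly, RingHom.id_apply, smul_eq_mul]
          ring }
    have hD_apply : ∀ (e : E) (f : F),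
        D e f = φ₀ ((f : F) : X →L[ℝ] ℝ) (e : Y) - ((f : F) : X →L[ℝ] ℝ) (T' e) :=
      fun e f => rfl
    -- pointwise estimates on basis vectors
    have hptwise : ∀ (i : Fin m) (j : Fin k), |D (c i) (b j)| < δ := by
      intro i j
      have h1 := hα2 i j
      have hmem' : ((c i : E) : Y) ∈ α.1.1 := hEα (c i).2
      have hg' : g α ((b j : F) : X →L[ℝ] ℝ) ((c i : E) : Y)
          = ((b j : F) : X →L[ℝ] ℝ) (T' (c i)) := by
        rw [hg]
        dsimp only
        rw [dif_pos hmem']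
        congr 1
      rw [hD_apply]
      rw [hg', abs_sub_comm] at h1
      exact h1
    have hDbound : ∀ (e : E) (j : Fin k), |D e (b j)| ≤ (∑ i, ‖cc i‖) * δ * ‖e‖ := by
      intro e j
      have h1 : D e (b j) = ∑ i, c.repr e i * D (c i) (b j) := by
        conv_lhs => rw [← c.sum_repr e]
        rw [map_sum, LinearMap.sum_apply]
        refine Finset.sum_congr rfl fun i _ => ?_
        rw [map_smul]
        rfl
      rw [h1]
      calc |∑ i, c.repr e i * D (c i) (b j)| ≤ ∑ i, |c.repr e i * D (c i) (b j)| :=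
          Finset.abs_sum_le_sum_abs _ _
      _ ≤ ∑ i, (‖cc i‖ * ‖e‖) * δ := by
          refine Finset.sum_le_sum fun i _ => ?_
          rw [abs_mul]
          exact mul_le_mul (hcc e i) (le_of_lt (hptwise i j)) (abs_nonneg _) (by positivity)
      _ = (∑ i, ‖cc i‖) * δ * ‖e‖ := by rw [← Finset.sum_mul, ← Finset.sum_mul]; ring
    let S : E →ₗ[ℝ] X := R₀.comp D
    have hfS : ∀ (e : E) (f : F), ((f : F) : X →L[ℝ] ℝ) (S e) = D e f :=
      fun e f => hQR (D e) f
    have hSval : ∀ e : E, S e = ∑ j, D e (b j) • xs j := by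
      intro e
      show R₀ (D e) = _
      conv_lhs => rw [← b.sum_dual_apply_smul_coord (D e)]
      rw [map_sum]
      refine Finset.sum_congr rfl fun j _ => ?_
      rw [map_smul]
    have hSnorm : ∀ e : E, ‖S e‖ ≤ C * δ * ‖e‖ := by
      intro e
      rw [hSval]
      calc ‖∑ j, D e (b j) • xs j‖ ≤ ∑ j, ‖D e (b j) • xs j‖ := norm_sum_le _ _
      _ ≤ ∑ j, ((∑ i, ‖cc i‖) * δ * ‖e‖) * ‖xs j‖ := by
          refine Finset.sum_le_sum fun j _ => ?_
          rw [norm_smul, Real.norm_eq_abs]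
          exact mul_le_mul_of_nonneg_right (hDbound e j) (norm_nonneg _)
      _ = C * δ * ‖e‖ := by rw [← Finset.mul_sum, hC]; ring
    refine ⟨T' + S, ?_, ?_, ?_⟩
    · intro e he
      have hT'e : ((T' e : X) : Y) = (e : Y) := hT1 α (inc e) (by rwa [hinc])
      have hD0 : D e = 0 := by
        ext f
        rw [hD_apply]
        have h1 : φ₀ ((f : F) : X →L[ℝ] ℝ) (e : Y) = ((f : F) : X →L[ℝ] ℝ) ⟨(e : Y), he⟩ :=
          hext _ ⟨(e : Y), he⟩
        have h2 : T' e = ⟨(e : Y), he⟩ := Subtype.ext hT'e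
        rw [h1, h2]
        simp
      have hS0 : S e = 0 := by
        show R₀ (D e) = 0
        rw [hD0, map_zero]
      have h3 : (T' + S) e = T' e := by rw [LinearMap.add_apply, hS0, add_zero]
      rw [h3, hT'e]
    · intro e
      have h1 : ‖T' e‖ ≤ (1 + ((α.2 : ℝ) + 1)⁻¹) * ‖e‖ := by
        have h2 := hT2 α (inc e)
        have hn : ‖inc e‖ = ‖e‖ := rfl
        rwa [hn] at h2
      have h2 : ((α.2 : ℝ) + 1)⁻¹ ≤ ε / 2 := by
        refine le_trans ?_ hN
        have : (N : ℝ) ≤ (α.2 : ℝ) := Nat.cast_le.2 hNα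
        exact inv_anti₀ (by positivity) (by linarith)
      calc ‖(T' + S) e‖ = ‖T' e + S e‖ := by rw [LinearMap.add_apply]
      _ ≤ ‖T' e‖ + ‖S e‖ := norm_add_le _ _
      _ ≤ (1 + ((α.2 : ℝ) + 1)⁻¹) * ‖e‖ + C * δ * ‖e‖ := add_le_add h1 (hSnorm e)
      _ ≤ (1 + ε) * ‖e‖ := by nlinarith [norm_nonneg e]
    · intro e f hf
      rw [hφ_apply]
      have h2 : f (S e) = D e ⟨f, hf⟩ := hfS e ⟨f, hf⟩
      have h3 : D e ⟨f, hf⟩ = φ₀ f (e : Y) - f (T' e) := hD_apply e ⟨f, hf⟩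
      have h4 : (T' + S) e = T' e + S e := LinearMap.add_apply _ _ _
      rw [h4, map_add, h2, h3]
      ring
  exact ⟨φ, hHB, hmain⟩
end

section
/- Let Y be a Banach space and X a closed subspace that is a super-ideal in Y. Then there exists a Hahn-Banach extension operator φ : X* → Y* such that for every ε > 0, every finite-dimensional subspace E ⊆ Y and every finite-dimensional subspace F ⊆ X* there exists a linear map T : E → X satisfying (i) Te = e for all e ∈ X ∩ E, (ii) (1+ε)⁻¹‖e‖ ≤ ‖Te‖ ≤ (1+ε)‖e‖ for all e ∈ E, and (iii) (φ f*)(e) = f*(Te) for all e ∈ E and all f* ∈ F. -/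
universe u v

open Metric Set

set_option maxHeartbeats 2000000
set_option synthInstance.maxHeartbeats 800000

section AuxSI

variable (Y : Type*) [NormedAddCommGroup Y] [NormedSpace ℝ Y]

/-- Auxiliary index type: pairs of a positive tolerance and a finite-dimensional subspace. -/
structure SIdx where
  eps : ℝ
  E : Subspace ℝ Y
  heps : 0 < eps
  hE : FiniteDimensional ℝ E

variable {Y}

instance : Preorder (SIdx Y) where
  le a b := b.eps ≤ a.eps ∧ a.E ≤ b.E
  le_refl a := ⟨le_rfl, le_rfl⟩
  le_trans a b c h1 h2 := ⟨h2.1.trans h1.1, h1.2.trans h2.2⟩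

instance : Nonempty (SIdx Y) := ⟨⟨1, ⊥, one_pos, inferInstance⟩⟩

instance : IsDirected (SIdx Y) (· ≤ ·) := by
  constructor
  intro a b
  haveI := a.hE; haveI := b.hE
  exact ⟨⟨min a.eps b.eps, a.E ⊔ b.E, lt_min a.heps b.heps, inferInstance⟩,
    ⟨min_le_left _ _, le_sup_left⟩, ⟨min_le_right _ _, le_sup_right⟩⟩

instance : (Filter.atTop : Filter (SIdx Y)).NeBot :=
  Filter.atTop_neBot_iff.mpr ⟨inferInstance, inferInstance⟩

end AuxSI

theorem superIdeal_hahnBanach_extension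
    (Y : Type*) [NormedAddCommGroup Y] [NormedSpace ℝ Y] [CompleteSpace Y]
    (X : Subspace ℝ Y) (hXc : IsClosed (X : Set Y)) (hX : IsSuperIdeal X) :
    ∃ φ : (X →L[ℝ] ℝ) →L[ℝ] (Y →L[ℝ] ℝ),
      IsHahnBanachExtensionOperator X φ ∧
      ∀ ε : ℝ, 0 < ε → ∀ E : Subspace ℝ Y, FiniteDimensional ℝ E →
        ∀ F : Subspace ℝ (X →L[ℝ] ℝ), FiniteDimensional ℝ F →
          ∃ T : E →ₗ[ℝ] X,
            (∀ e : E, (e : Y) ∈ X → ((T e : X) : Y) = (e : Y)) ∧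
            (∀ e : E, (1 + ε)⁻¹ * ‖e‖ ≤ ‖T e‖ ∧ ‖T e‖ ≤ (1 + ε) * ‖e‖) ∧
            (∀ e : E, ∀ f : X →L[ℝ] ℝ, f ∈ F → φ f (e : Y) = f (T e)) := by
  classical
  obtain ⟨U, hU⟩ := (Filter.atTop : Filter (SIdx Y)).exists_ultrafilter_le
  choose Tm hT1 hT2 using fun α : SIdx Y => hX α.eps α.heps α.E α.hE
  -- norm-preserving extensions of `f ∘ Tm α` from `α.E` to `Y`
  have hTc : ∀ (α : SIdx Y) (f : X →L[ℝ] ℝ), ∃ gf : Y →L[ℝ] ℝ,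
      (∀ x : α.E, gf x = f (Tm α x)) ∧ ‖gf‖ ≤ (1 + α.eps) * ‖f‖ := by
    intro α f
    haveI := α.hE
    obtain ⟨gf, h1, h2⟩ := exists_extension_norm_eq α.E
      (f.comp (LinearMap.toContinuousLinearMap (Tm α)))
    refine ⟨gf, fun x => by simpa using h1 x, ?_⟩
    rw [h2]
    have hε := α.heps
    refine ContinuousLinearMap.opNorm_le_bound _ (by positivity) fun x => ?_
    have h3 : ‖f (Tm α x)‖ ≤ ‖f‖ * ‖Tm α x‖ := f.le_opNorm _
    have h4 : ‖Tm α x‖ ≤ (1 + α.eps) * ‖x‖ := (hT2 α x).2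
    have h5 : ‖f‖ * ‖Tm α x‖ ≤ ‖f‖ * ((1 + α.eps) * ‖x‖) :=
      mul_le_mul_of_nonneg_left h4 (norm_nonneg f)
    calc ‖(f.comp (LinearMap.toContinuousLinearMap (Tm α))) x‖
        = ‖f (Tm α x)‖ := by simp
      _ ≤ (1 + α.eps) * ‖f‖ * ‖x‖ := by nlinarith [norm_nonneg (f (Tm α x))]
  choose g hgx hgn using hTc
  -- eventual membership
  have hmem : ∀ y : Y, ∀ᶠ α in (U : Filter (SIdx Y)), y ∈ α.E := by
    intro y
    refine hU ?_
    haveI : FiniteDimensional ℝ (Submodule.span ℝ ({y} : Set Y)) := inferInstance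
    filter_upwards [Filter.eventually_ge_atTop
      (⟨1, Submodule.span ℝ {y}, one_pos, inferInstance⟩ : SIdx Y)] with α hα
    exact hα.2 (Submodule.mem_span_singleton_self y)
  -- limits exist along the ultrafilter
  have hlimex : ∀ (f : X →L[ℝ] ℝ) (y : Y), ∃ r : ℝ,
      Filter.Tendsto (fun α => g α f y) (U : Filter (SIdx Y)) (nhds r) := by
    intro f y
    have hband : ∀ᶠ α in (U : Filter (SIdx Y)),
        (fun α => g α f y) α ∈ Set.Icc (-(2 * ‖f‖ * ‖y‖)) (2 * ‖f‖ * ‖y‖) := by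
      refine hU ?_
      filter_upwards [Filter.eventually_ge_atTop (⟨1, ⊥, one_pos, inferInstance⟩ : SIdx Y)]
        with α hα
      have h1 : ‖g α f y‖ ≤ (1 + α.eps) * ‖f‖ * ‖y‖ := by
        calc ‖g α f y‖ ≤ ‖g α f‖ * ‖y‖ := (g α f).le_opNorm y
          _ ≤ (1 + α.eps) * ‖f‖ * ‖y‖ :=
            mul_le_mul_of_nonneg_right (hgn α f) (norm_nonneg y)
      have h0 : α.eps ≤ 1 := hα.1
      have h2 : (1 + α.eps) ≤ 2 := by linarith
      have h3 : ‖g α f y‖ ≤ 2 * ‖f‖ * ‖y‖ := by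
        refine h1.trans ?_
        gcongr
      rw [Real.norm_eq_abs, abs_le] at h3
      exact ⟨by linarith [h3.1], h3.2⟩
    obtain ⟨r, _, hr⟩ := (isCompact_Icc (a := -(2 * ‖f‖ * ‖y‖))
      (b := 2 * ‖f‖ * ‖y‖)).ultrafilter_le_nhds
      (U.map (fun α => g α f y)) (by rwa [Ultrafilter.coe_map, Filter.le_principal_iff,
        Filter.mem_map])
    exact ⟨r, hr⟩
  choose lm hlm using hlimex
  -- linearity in y
  have key_addy : ∀ f (y y' : Y), lm f (y + y') = lm f y + lm f y' := by
    intro f y y'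
    refine tendsto_nhds_unique (hlm f (y + y')) ?_
    exact (((hlm f y).add (hlm f y')).congr (fun α => (map_add (g α f) y y').symm))
  have key_smuly : ∀ f (c : ℝ) (y : Y), lm f (c • y) = c • lm f y := by
    intro f c y
    refine tendsto_nhds_unique (hlm f (c • y)) ?_
    refine ((hlm f y).const_smul c).congr (fun α => ?_)
    simp [map_smul]
  -- bound
  have key_bound : ∀ f (y : Y), |lm f y| ≤ ‖f‖ * ‖y‖ := by
    intro f y
    have hb : ∀ η : ℝ, 0 < η → |lm f y| ≤ (1 + η) * (‖f‖ * ‖y‖) := by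
      intro η hη
      refine le_of_tendsto (hlm f y).abs ?_
      refine hU ?_
      filter_upwards [Filter.eventually_ge_atTop (⟨η, ⊥, hη, inferInstance⟩ : SIdx Y)] with α hα
      have h0 : α.eps ≤ η := hα.1
      have h1 : ‖g α f y‖ ≤ (1 + α.eps) * ‖f‖ * ‖y‖ := by
        calc ‖g α f y‖ ≤ ‖g α f‖ * ‖y‖ := (g α f).le_opNorm y
          _ ≤ (1 + α.eps) * ‖f‖ * ‖y‖ :=
            mul_le_mul_of_nonneg_right (hgn α f) (norm_nonneg y)
      have h2 : (1 + α.eps) * ‖f‖ * ‖y‖ ≤ (1 + η) * (‖f‖ * ‖y‖) := by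
        rw [← mul_assoc]
        gcongr <;> linarith
      calc |g α f y| = ‖g α f y‖ := (Real.norm_eq_abs _).symm
        _ ≤ (1 + η) * (‖f‖ * ‖y‖) := h1.trans h2
    refine le_of_forall_pos_le_add fun η hη => ?_
    have h3 := hb (η / (‖f‖ * ‖y‖ + 1)) (by positivity)
    have h4 : (0:ℝ) ≤ ‖f‖ * ‖y‖ := by positivity
    have h5 : η / (‖f‖ * ‖y‖ + 1) * (‖f‖ * ‖y‖) ≤ η := by
      rw [div_mul_eq_mul_div, div_le_iff₀ (by positivity)]
      nlinarith
    nlinarith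
  -- linearity in f
  have key_addf : ∀ f f' (y : Y), lm (f + f') y = lm f y + lm f' y := by
    intro f f' y
    refine tendsto_nhds_unique (hlm (f + f') y) ?_
    refine ((hlm f y).add (hlm f' y)).congr' ?_
    filter_upwards [hmem y] with α hα
    rw [hgx α f ⟨y, hα⟩, hgx α f' ⟨y, hα⟩, hgx α (f + f') ⟨y, hα⟩]
    simp
  have key_smulf : ∀ (c : ℝ) f (y : Y), lm (c • f) y = c • lm f y := by
    intro c f y
    refine tendsto_nhds_unique (hlm (c • f) y) ?_
    refine ((hlm f y).const_smul c).congr' ?_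
    filter_upwards [hmem y] with α hα
    rw [hgx α f ⟨y, hα⟩, hgx α (c • f) ⟨y, hα⟩]
    simp
  -- build φ
  let φ₁ : (X →L[ℝ] ℝ) → (Y →L[ℝ] ℝ) := fun f =>
    LinearMap.mkContinuous
      { toFun := lm f, map_add' := key_addy f, map_smul' := key_smuly f } ‖f‖
      (fun y => by
        simpa [Real.norm_eq_abs] using key_bound f y)
  have hφ₁apply : ∀ f y, φ₁ f y = lm f y := fun f y => rfl
  have hφ₁norm : ∀ f, ‖φ₁ f‖ ≤ ‖f‖ := fun f =>
    LinearMap.mkContinuous_norm_le _ (norm_nonneg f) _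
  let φ₀ : (X →L[ℝ] ℝ) →ₗ[ℝ] (Y →L[ℝ] ℝ) :=
    { toFun := φ₁
      map_add' := fun f f' => by ext y; exact key_addf f f' y
      map_smul' := fun c f => by ext y; exact key_smulf c f y }
  have hφ₀bnd : ∀ f, ‖φ₀ f‖ ≤ 1 * ‖f‖ := fun f => by
    rw [one_mul]; exact hφ₁norm f
  let φ : (X →L[ℝ] ℝ) →L[ℝ] (Y →L[ℝ] ℝ) :=
    ⟨φ₀, by exact AddMonoidHomClass.continuous_of_bound φ₀ 1 hφ₀bnd⟩
  have hφapply : ∀ f y, φ f y = lm f y := fun f y => rfl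
  -- Hahn-Banach property
  have hHB : ∀ f (x : X), φ f (x : Y) = f x := by
    intro f x
    refine tendsto_nhds_unique (hlm f (x : Y)) ?_
    refine tendsto_const_nhds.congr' ?_
    filter_upwards [hmem (x : Y)] with α hα
    rw [hgx α f ⟨(x : Y), hα⟩]
    congr 1
    exact (Subtype.ext (hT1 α ⟨(x : Y), hα⟩ x.2)).symm
  have hnorm : ∀ f, ‖φ f‖ = ‖f‖ := by
    intro f
    refine le_antisymm (hφ₁norm f) ?_
    have hfeq : f = (φ f).comp X.subtypeL := by
      ext x
      exact (hHB f x).symm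
    calc ‖f‖ = ‖(φ f).comp X.subtypeL‖ := by rw [← hfeq]
      _ ≤ ‖φ f‖ * ‖X.subtypeL‖ := ContinuousLinearMap.opNorm_comp_le _ _
      _ ≤ ‖φ f‖ * 1 := by
          gcongr
          exact ContinuousLinearMap.opNorm_le_bound _ zero_le_one (fun x => by simp)
      _ = ‖φ f‖ := mul_one _
  refine ⟨φ, fun f => ⟨hHB f, hnorm f⟩, ?_⟩
  -- Part 2: exact agreement on a finite-dimensional subspace of functionals
  intro ε hε E hE F hF
  haveI := hE; haveI := hF
  set ε' : ℝ := ε / 2 with hε'def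
  have hε'pos : 0 < ε' := by positivity
  have h1ε : (0:ℝ) < 1 + ε := by linarith
  have h1ε' : (0:ℝ) < 1 + ε' := by linarith
  have hinvlt : (1 + ε)⁻¹ < (1 + ε')⁻¹ := by
    apply inv_strictAnti₀ h1ε'
    rw [hε'def]; linarith
  set c₀ : ℝ := min (ε / 2) ((1 + ε')⁻¹ - (1 + ε)⁻¹) with hc₀def
  have hc₀pos : 0 < c₀ := lt_min (by positivity) (by linarith)
  -- bases
  set bE := Module.finBasis ℝ E with hbE
  haveI : Module.Free ℝ F := Module.Free.of_divisionRing ℝ ↥F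
  set bF := Module.finBasis ℝ F with hbF
  -- coordinate bound on E
  obtain ⟨CE, hCE0, hCE⟩ : ∃ CE : ℝ, 0 ≤ CE ∧ ∀ e : E, (∑ j, |bE.repr e j|) ≤ CE * ‖e‖ := by
    refine ⟨∑ j, ‖LinearMap.toContinuousLinearMap (bE.coord j)‖, by positivity, fun e => ?_⟩
    rw [Finset.sum_mul]
    refine Finset.sum_le_sum fun j _ => ?_
    have h := (LinearMap.toContinuousLinearMap (bE.coord j)).le_opNorm e
    simpa [Real.norm_eq_abs] using h
  -- surjectivity onto the dual of F
  have hsurj : ∀ w : Module.Dual ℝ F, ∃ x : X, ∀ f' : F, (f' : X →L[ℝ] ℝ) x = w f' := by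
    let Ψ : X →ₗ[ℝ] Module.Dual ℝ F :=
      { toFun := fun x =>
          { toFun := fun f' => ((f' : X →L[ℝ] ℝ) x : ℝ)
            map_add' := fun f' g' => by simp
            map_smul' := fun c f' => by simp }
        map_add' := fun x x' => LinearMap.ext fun f' => by simp
        map_smul' := fun c x => LinearMap.ext fun f' => by simp }
    have hΨapp : ∀ (x : X) (f' : F), Ψ x f' = (f' : X →L[ℝ] ℝ) x := fun x f' => rfl
    have hspan : Submodule.span ℝ (Set.range Ψ) = ⊤ := by
      refine Submodule.span_eq_top_of_ne_zero (R := ℝ) (M := ↥F) (s := Set.range ⇑Ψ) ?_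
      intro z hz
      by_contra hno
      push_neg at hno
      apply hz
      have hzero : ∀ x : X, (z : X →L[ℝ] ℝ) x = 0 := by
        intro x
        have h := hno (Ψ x) ⟨x, rfl⟩
        rwa [hΨapp] at h
      have hcoe : (z : X →L[ℝ] ℝ) = 0 := ContinuousLinearMap.ext fun x => by
        rw [hzero x]; rfl
      exact Subtype.ext hcoe
    have hrange : LinearMap.range Ψ = ⊤ := by
      have h1 : Submodule.span ℝ (Set.range Ψ) = LinearMap.range Ψ := by
        rw [← LinearMap.coe_range, Submodule.span_eq (LinearMap.range Ψ)]
      rw [← h1, hspan]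
    intro w
    obtain ⟨x, hx⟩ := (LinearMap.range_eq_top.mp hrange) w
    exact ⟨x, fun f' => by rw [← hx]; rfl⟩
  choose xd hxd using fun i => hsurj (bF.coord i)
  set K : ℝ := CE * ∑ i, ‖xd i‖ with hKdef
  have hK0 : 0 ≤ K := by
    rw [hKdef]; positivity
  set δ : ℝ := c₀ / (K + 1) with hδdef
  have hδpos : 0 < δ := by
    rw [hδdef]; positivity
  -- choose a good index α
  have hev1 : ∀ᶠ α in (U : Filter (SIdx Y)), α.eps ≤ ε' ∧ E ≤ α.E := by
    refine hU ?_
    filter_upwards [Filter.eventually_ge_atTop (⟨ε', E, hε'pos, hE⟩ : SIdx Y)] with α hα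
    exact ⟨hα.1, hα.2⟩
  have hev2 : ∀ᶠ α in (U : Filter (SIdx Y)), ∀ i j,
      ∀ h : ((bE j : E) : Y) ∈ α.E,
        |φ ((bF i : F) : X →L[ℝ] ℝ) ((bE j : E) : Y)
          - ((bF i : F) : X →L[ℝ] ℝ) (Tm α ⟨((bE j : E) : Y), h⟩)| ≤ δ := by
    rw [Filter.eventually_all]
    intro i
    rw [Filter.eventually_all]
    intro j
    have htd := hlm ((bF i : F) : X →L[ℝ] ℝ) ((bE j : E) : Y)
    have hclose : ∀ᶠ α in (U : Filter (SIdx Y)),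
        |lm ((bF i : F) : X →L[ℝ] ℝ) ((bE j : E) : Y)
          - g α ((bF i : F) : X →L[ℝ] ℝ) ((bE j : E) : Y)| ≤ δ := by
      have hh := Metric.tendsto_nhds.mp htd δ hδpos
      filter_upwards [hh] with α hα
      rw [Real.dist_eq, abs_sub_comm] at hα
      exact hα.le
    filter_upwards [hclose] with α h1
    intro h
    rw [hφapply, ← hgx α ((bF i : F) : X →L[ℝ] ℝ) ⟨((bE j : E) : Y), h⟩]
    exact h1
  obtain ⟨α, hα1, hα2⟩ := (hev1.and hev2).exists
  obtain ⟨hαε, hαE⟩ := hα1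
  -- the base map and the correction
  set T₀ : E →ₗ[ℝ] X := (Tm α).comp (Submodule.inclusion hαE) with hT₀def
  have hcoeincl : ∀ e : E, ((Submodule.inclusion hαE e : α.E) : Y) = (e : Y) := fun e => rfl
  have hT₀fix : ∀ e : E, (e : Y) ∈ X → ((T₀ e : X) : Y) = (e : Y) := by
    intro e he
    have h := hT1 α (Submodule.inclusion hαE e) (by rwa [hcoeincl])
    rwa [hcoeincl] at h
  have hT₀norm : ∀ e : E, (1 + α.eps)⁻¹ * ‖e‖ ≤ ‖T₀ e‖ ∧ ‖T₀ e‖ ≤ (1 + α.eps) * ‖e‖ := by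
    intro e
    have h := hT2 α (Submodule.inclusion hαE e)
    have hne : ‖Submodule.inclusion hαE e‖ = ‖e‖ := by
      rw [Submodule.coe_norm, Submodule.coe_norm, hcoeincl]
    rwa [hne] at h
  set L : Fin (Module.finrank ℝ F) → (E →ₗ[ℝ] ℝ) := fun i =>
    (LinearMap.comp (φ ((bF i : F) : X →L[ℝ] ℝ)).toLinearMap E.subtype)
      - (LinearMap.comp ((bF i : F) : X →L[ℝ] ℝ).toLinearMap T₀) with hLdef
  have hLapp : ∀ i (e : E), L i e
      = φ ((bF i : F) : X →L[ℝ] ℝ) (e : Y) - ((bF i : F) : X →L[ℝ] ℝ) (T₀ e) :=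
    fun i e => rfl
  set S : E →ₗ[ℝ] X := ∑ i, (L i).smulRight (xd i) with hSdef
  have hSapp : ∀ e : E, S e = ∑ i, L i e • xd i := by
    intro e
    rw [hSdef, LinearMap.sum_apply]
    exact Finset.sum_congr rfl fun i _ => rfl
  -- smallness of L on basis vectors
  have hLbase : ∀ i j, |L i (bE j)| ≤ δ := by
    intro i j
    have hmemj : ((bE j : E) : Y) ∈ α.E := hαE (bE j).2
    have h := hα2 i j hmemj
    have hT₀j : T₀ (bE j) = Tm α ⟨((bE j : E) : Y), hmemj⟩ := by
      rw [hT₀def]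
      rfl
    rw [hLapp, hT₀j]
    exact h
  have hLsmall : ∀ i (e : E), |L i e| ≤ CE * δ * ‖e‖ := by
    intro i e
    have hrepr : e = ∑ j, bE.repr e j • bE j := (bE.sum_repr e).symm
    have hLe : L i e = ∑ j, bE.repr e j * L i (bE j) := by
      conv_lhs => rw [hrepr]
      rw [map_sum]
      exact Finset.sum_congr rfl fun j _ => by rw [map_smul, smul_eq_mul]
    rw [hLe]
    calc |∑ j, bE.repr e j * L i (bE j)| ≤ ∑ j, |bE.repr e j * L i (bE j)| :=
          Finset.abs_sum_le_sum_abs _ _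
      _ ≤ ∑ j, |bE.repr e j| * δ := by
          refine Finset.sum_le_sum fun j _ => ?_
          rw [abs_mul]
          exact mul_le_mul_of_nonneg_left (hLbase i j) (abs_nonneg _)
      _ = (∑ j, |bE.repr e j|) * δ := by rw [Finset.sum_mul]
      _ ≤ (CE * ‖e‖) * δ := mul_le_mul_of_nonneg_right (hCE e) hδpos.le
      _ = CE * δ * ‖e‖ := by ring
  have hS : ∀ e : E, ‖S e‖ ≤ c₀ * ‖e‖ := by
    intro e
    rw [hSapp]
    have hδK : δ * K ≤ c₀ := by
      rw [hδdef, div_mul_eq_mul_div, div_le_iff₀ (by positivity)]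
      nlinarith
    calc ‖∑ i, L i e • xd i‖ ≤ ∑ i, ‖L i e • xd i‖ := norm_sum_le _ _
      _ ≤ ∑ i, (CE * δ * ‖e‖) * ‖xd i‖ := by
          refine Finset.sum_le_sum fun i _ => ?_
          rw [norm_smul, Real.norm_eq_abs]
          exact mul_le_mul_of_nonneg_right (hLsmall i e) (norm_nonneg _)
      _ = (CE * δ * ‖e‖) * ∑ i, ‖xd i‖ := by rw [← Finset.mul_sum]
      _ = δ * K * ‖e‖ := by rw [hKdef]; ring
      _ ≤ c₀ * ‖e‖ := mul_le_mul_of_nonneg_right hδK (norm_nonneg e)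
  -- evaluation of functionals in F on S e
  have hfS : ∀ (f' : F) (e : E), ((f' : X →L[ℝ] ℝ)) (S e) = ∑ i, bF.repr f' i * L i e := by
    intro f' e
    rw [hSapp, map_sum]
    refine Finset.sum_congr rfl fun i _ => ?_
    rw [map_smul, smul_eq_mul, hxd i f', Module.Basis.coord_apply]
    ring
  -- the defining property on basis elements of F
  have hbase : ∀ i (e : E),
      φ ((bF i : F) : X →L[ℝ] ℝ) (e : Y) = ((bF i : F) : X →L[ℝ] ℝ) (T₀ e + S e) := by
    intro i e
    rw [map_add, hfS (bF i) e]
    have hcollapse : ∑ i', bF.repr (bF i) i' * L i' e = L i e := by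
      rw [Module.Basis.repr_self]
      rw [Finset.sum_eq_single i]
      · simp
      · intro b _ hb
        rw [Finsupp.single_apply, if_neg (Ne.symm hb), zero_mul]
      · intro hi
        exact absurd (Finset.mem_univ i) hi
    rw [hcollapse, hLapp]
    ring
  refine ⟨T₀ + S, ?_, ?_, ?_⟩
  · -- fixes X ∩ E
    intro e he
    have hS0 : S e = 0 := by
      rw [hSapp]
      refine Finset.sum_eq_zero fun i _ => ?_
      have hfix : ((T₀ e : X) : Y) = (e : Y) := hT₀fix e he
      have hL0 : L i e = 0 := by
        rw [hLapp]
        have hT : T₀ e = ⟨(e : Y), he⟩ := Subtype.ext hfix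
        rw [hT, hHB ((bF i : F) : X →L[ℝ] ℝ) ⟨(e : Y), he⟩]
        ring
      rw [hL0, zero_smul]
    rw [LinearMap.add_apply, hS0, add_zero]
    exact hT₀fix e he
  · -- norm bounds
    intro e
    have h0 := hT₀norm e
    have hSe := hS e
    have hTe : (T₀ + S) e = T₀ e + S e := LinearMap.add_apply _ _ _
    have hinv1 : (1 + ε')⁻¹ ≤ (1 + α.eps)⁻¹ := by
      apply inv_anti₀ (by linarith [α.heps]) (by linarith)
    have hc1 : c₀ ≤ ε / 2 := min_le_left _ _
    have hc2 : c₀ ≤ (1 + ε')⁻¹ - (1 + ε)⁻¹ := min_le_right _ _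
    have hA := mul_le_mul_of_nonneg_right hinv1 (norm_nonneg e)
    have hB := mul_le_mul_of_nonneg_right hc2 (norm_nonneg e)
    rw [sub_mul] at hB
    have hC := mul_le_mul_of_nonneg_right hc1 (norm_nonneg e)
    have hαε2 : (1 + α.eps) ≤ 1 + ε' := by linarith
    have hD := mul_le_mul_of_nonneg_right hαε2 (norm_nonneg e)
    have hε'e : (1 + ε') * ‖e‖ + (ε / 2) * ‖e‖ = (1 + ε) * ‖e‖ := by
      rw [hε'def]; ring
    constructor
    · -- lower bound
      have h2 : ‖T₀ e‖ ≤ ‖(T₀ + S) e‖ + ‖S e‖ := by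
        have : T₀ e = (T₀ + S) e - S e := by rw [hTe]; abel
        rw [this]
        exact norm_sub_le _ _
      have hCe : c₀ * ‖e‖ ≤ (1 + ε')⁻¹ * ‖e‖ - (1 + ε)⁻¹ * ‖e‖ := hB
      linarith [h0.1]
    · -- upper bound
      have h2 : ‖(T₀ + S) e‖ ≤ ‖T₀ e‖ + ‖S e‖ := by
        rw [hTe]
        exact norm_add_le _ _
      linarith [h0.2]
  · -- agreement with φ on F
    intro e f hf
    set f' : F := (⟨f, hf⟩ : F) with hf'def
    have hfc : f = ((f' : F) : X →L[ℝ] ℝ) := rfl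
    have hco : f = ∑ i, bF.repr f' i • ((bF i : F) : X →L[ℝ] ℝ) := by
      rw [hfc]
      conv_lhs => rw [← bF.sum_repr f']
      rw [AddSubmonoidClass.coe_finset_sum]
      exact Finset.sum_congr rfl fun i _ => rfl
    rw [hco]
    rw [map_sum]
    simp only [ContinuousLinearMap.coe_sum', Finset.sum_apply,
      ContinuousLinearMap.coe_smul', Pi.smul_apply, smul_eq_mul, map_smul]
    refine Finset.sum_congr rfl fun i _ => ?_
    rw [hbase i e, LinearMap.add_apply]
end

section
/- Let Y be a Banach space and X a closed subspace of Y. If X is a strict ideal in Y, that is, there exists a Hahn-Banach extension operator φ : X* → Y* whose range is 1-norming for Y, then X is a super-ideal in Y. -/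
universe u v

open Metric Set

section Aux

variable {Y : Type*} [NormedAddCommGroup Y] [NormedSpace ℝ Y]

private theorem near_norm {W : Type*} [NormedAddCommGroup W] [NormedSpace ℝ W]

    (ψ : W →L[ℝ] ℝ) {η : ℝ} (hη : 0 < η) :
    ∃ x : W, ‖x‖ ≤ 1 ∧ ‖ψ‖ - η ≤ ψ x := by
  rcases lt_or_ge (‖ψ‖ - η) 0 with h | h
  · exact ⟨0, by simp, by simpa using h.le⟩
  · have h2 : ‖ψ‖ - η < ‖ψ‖ := by linarith
    obtain ⟨x, hx1, hx2⟩ := ψ.exists_lt_apply_of_lt_opNorm h2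
    rw [Real.norm_eq_abs] at hx2
    rcases le_or_gt 0 (ψ x) with hs | hs
    · exact ⟨x, hx1.le, by rw [abs_of_nonneg hs] at hx2; linarith⟩
    · refine ⟨-x, by simpa using hx1.le, ?_⟩
      rw [abs_of_neg hs] at hx2
      rw [map_neg]
      linarith

private theorem pi_dual_expand {Γ : Type*} [Fintype Γ] [DecidableEq Γ]
    (ℓ : (Γ → ℝ) →ₗ[ℝ] ℝ) (v : Γ → ℝ) :
    ℓ v = ∑ l, v l * ℓ (Pi.single l 1) := by
  conv_lhs => rw [← Finset.univ_sum_single v]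
  rw [map_sum]
  refine Finset.sum_congr rfl fun l _ => ?_
  have h : Pi.single l (v l) = v l • (Pi.single l (1:ℝ) : Γ → ℝ) := by
    funext j
    rcases eq_or_ne j l with rfl | hne
    · simp
    · simp [Pi.single_eq_of_ne hne]
  rw [h, map_smul, smul_eq_mul]

set_option maxHeartbeats 1000000 in
set_option synthInstance.maxHeartbeats 400000 in
theorem core_exists
    {X : Subspace ℝ Y}
    (φ : (X →L[ℝ] ℝ) →L[ℝ] (Y →L[ℝ] ℝ))
    (hφ : IsHahnBanachExtensionOperator X φ)
    {m : ℕ} {Γ : Type*} [Fintype Γ] [DecidableEq Γ]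
    (b : Γ → X) (t : Γ → Fin m → ℝ) (yv : Fin m → Y)
    (f : Γ → (X →L[ℝ] ℝ))
    (hP : ∀ l, ‖(b l : Y) + ∑ i, t l i • yv i‖ ≤ 1)
    (hinj : ∀ u : Fin m → X, (∀ l, ∑ i, t l i • u i = 0) → u = 0)
    {r₁ : ℝ} (hr : 1 < r₁) :
    ∃ u : Fin m → X,
      (∀ l i, f l (u i) = φ (f l) (yv i)) ∧
      (∀ l, ‖b l + ∑ i, t l i • u i‖ ≤ r₁) := by
  classical
  set r₀ : ℝ := (1 + r₁) / 2 with hr₀def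
  have hr₀1 : 1 < r₀ := by rw [hr₀def]; linarith
  have hr₀r : r₀ < r₁ := by rw [hr₀def]; linarith
  have hr₀pos : (0:ℝ) < r₀ := by linarith
  -- the linear maps
  set A : Γ → ((ℝ × (Fin m → X)) →ₗ[ℝ] X) := fun l =>
    LinearMap.smulRight (LinearMap.fst ℝ ℝ (Fin m → X)) (b l)
      + ∑ i, t l i • ((LinearMap.proj i).comp (LinearMap.snd ℝ ℝ (Fin m → X))) with hAdef
  have hA : ∀ l (z : ℝ × (Fin m → X)), A l z = z.1 • b l + ∑ i, t l i • z.2 i := by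
    intro l z
    simp [hAdef, LinearMap.sum_apply]
  set M : X →ₗ[ℝ] (Γ → ℝ) := LinearMap.pi (fun l => (f l : X →ₗ[ℝ] ℝ)) with hMdef
  have hM : ∀ (x : X) (l : Γ), M x l = f l x := fun x l => rfl
  set Φ : (ℝ × (Fin m → X)) →ₗ[ℝ] (ℝ × (Fin m → Γ → ℝ)) :=
    (LinearMap.fst ℝ ℝ (Fin m → X)).prod
      (LinearMap.pi fun i => M.comp ((LinearMap.proj i).comp (LinearMap.snd ℝ ℝ (Fin m → X)))) with hΦdef
  have hΦ : ∀ z : ℝ × (Fin m → X), Φ z = (z.1, fun i => M (z.2 i)) := by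
    intro z; rfl
  set c : ℝ × (Fin m → Γ → ℝ) := (1, fun i l => φ (f l) (yv i)) with hcdef
  set B : Set (ℝ × (Fin m → X)) := {z | |z.1| ≤ r₀ ∧ ∀ l, ‖A l z‖ ≤ r₀} with hBdef
  set ι : (ℝ × (Fin m → X)) →ₗ[ℝ] (ℝ × (Γ → X)) :=
    (LinearMap.fst ℝ ℝ (Fin m → X)).prod (LinearMap.pi fun l => A l) with hιdef
  have hι : ∀ z : ℝ × (Fin m → X), ι z = (z.1, fun l => A l z) := fun z => rfl
  have hker : ∀ z : ℝ × (Fin m → X), ι z = 0 → z = 0 := by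
    intro z hz
    have h1 : z.1 = 0 := congrArg Prod.fst hz
    have h2 : ∀ l, A l z = 0 := fun l => congrFun (congrArg Prod.snd hz) l
    have h3 : ∀ l, ∑ i, t l i • z.2 i = 0 := by
      intro l
      have := h2 l
      rw [hA, h1, zero_smul, zero_add] at this
      exact this
    have h4 := hinj z.2 h3
    rw [Prod.ext_iff]
    exact ⟨h1, h4⟩
  have hstepA : c ∈ closure (Φ '' B) := by
    by_contra hc
    have hBconv : Convex ℝ B := by
      intro z hz w hw a b' ha hb' hab
      constructor
      · have : (a • z + b' • w).1 = a * z.1 + b' * w.1 := rfl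
        rw [this]
        calc |a * z.1 + b' * w.1| ≤ |a * z.1| + |b' * w.1| := abs_add_le _ _
          _ = a * |z.1| + b' * |w.1| := by
              rw [abs_mul, abs_mul, abs_of_nonneg ha, abs_of_nonneg hb']
          _ ≤ a * r₀ + b' * r₀ := by
              gcongr
              exacts [hz.1, hw.1]
          _ = r₀ := by rw [← add_mul, hab, one_mul]
      · intro l
        have : A l (a • z + b' • w) = a • A l z + b' • A l w := by
          rw [map_add, map_smul, map_smul]
        rw [this]
        calc ‖a • A l z + b' • A l w‖ ≤ ‖a • A l z‖ + ‖b' • A l w‖ := norm_add_le _ _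
          _ = a * ‖A l z‖ + b' * ‖A l w‖ := by
              rw [norm_smul, norm_smul, Real.norm_eq_abs, Real.norm_eq_abs,
                abs_of_nonneg ha, abs_of_nonneg hb']
          _ ≤ a * r₀ + b' * r₀ := by gcongr; exacts [hz.2 l, hw.2 l]
          _ = r₀ := by rw [← add_mul, hab, one_mul]
    have hconv : Convex ℝ (closure (Φ '' B)) := (hBconv.linear_image Φ).closure
    obtain ⟨Λ, γ, hsep, hγc⟩ :=
      geometric_hahn_banach_closed_point hconv isClosed_closure hc
    have h0B : (0 : ℝ × (Fin m → X)) ∈ B := by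
      constructor
      · simpa using hr₀pos.le
      · intro l
        rw [map_zero, norm_zero]
        exact hr₀pos.le
    have hγpos : 0 < γ := by
      have := hsep (Φ 0) (subset_closure ⟨0, h0B, rfl⟩)
      simpa using this
    have hBlt : ∀ z ∈ B, Λ (Φ z) < γ := fun z hz =>
      hsep (Φ z) (subset_closure ⟨z, hz, rfl⟩)
    have hkey : ∀ z : ℝ × (Fin m → X), Λ (Φ z) ≤ γ / r₀ * ‖ι z‖ := by
      intro z
      rcases eq_or_ne (ι z) 0 with h0 | h0
      · have hz0 : z = 0 := hker z h0
        rw [hz0]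
        simp
      · set ρ := ‖ι z‖ with hρdef
        have hρ : 0 < ρ := norm_pos_iff.mpr h0
        have hz1 : |z.1| ≤ ρ := by
          have : z.1 = (ι z).1 := by rw [hι]
          rw [this, ← Real.norm_eq_abs]
          exact norm_fst_le (ι z)
        have hzl : ∀ l, ‖A l z‖ ≤ ρ := by
          intro l
          have h5 : A l z = (ι z).2 l := by rw [hι]
          rw [h5]
          exact le_trans (norm_le_pi_norm _ l) (norm_snd_le (ι z))
        have hmem : (r₀ / ρ) • z ∈ B := by
          constructor
          · have : ((r₀ / ρ) • z).1 = (r₀ / ρ) * z.1 := rfl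
            rw [this, abs_mul, abs_of_nonneg (by positivity : (0:ℝ) ≤ r₀ / ρ)]
            calc r₀ / ρ * |z.1| ≤ r₀ / ρ * ρ := by gcongr
              _ = r₀ := div_mul_cancel₀ _ hρ.ne'
          · intro l
            rw [map_smul, norm_smul, Real.norm_eq_abs,
              abs_of_nonneg (by positivity : (0:ℝ) ≤ r₀ / ρ)]
            calc r₀ / ρ * ‖A l z‖ ≤ r₀ / ρ * ρ := by gcongr; exact hzl l
              _ = r₀ := div_mul_cancel₀ _ hρ.ne'
        have hlt : (r₀ / ρ) * Λ (Φ z) < γ := by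
          have := hBlt _ hmem
          rw [map_smul, map_smul, smul_eq_mul] at this
          exact this
        have hρr₀ : (0:ℝ) < r₀ / ρ := by positivity
        calc Λ (Φ z) = (ρ / r₀) * ((r₀ / ρ) * Λ (Φ z)) := by
              field_simp
          _ ≤ (ρ / r₀) * γ := by
              apply mul_le_mul_of_nonneg_left hlt.le (by positivity)
          _ = γ / r₀ * ρ := by ring
    have hinj' : Function.Injective ι := by
      rw [← LinearMap.ker_eq_bot]
      exact LinearMap.ker_eq_bot'.mpr hker
    set p : Submodule ℝ (ℝ × (Γ → X)) := LinearMap.range ι with hpdef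
    set eqv : (ℝ × (Fin m → X)) ≃ₗ[ℝ] p := LinearEquiv.ofInjective ι hinj' with heqvdef
    set f₀lin : p →ₗ[ℝ] ℝ := (Λ.toLinearMap.comp Φ).comp (eqv.symm.toLinearMap) with hf₀def
    have hf₀lin : ∀ z : ℝ × (Fin m → X),
        f₀lin ⟨ι z, LinearMap.mem_range_self ι z⟩ = Λ (Φ z) := by
      intro z
      have h1 : (⟨ι z, LinearMap.mem_range_self ι z⟩ : p) = eqv z := by
        apply Subtype.ext
        exact (LinearEquiv.ofInjective_apply ι (h := hinj') z).symm
      rw [h1]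
      simp [hf₀def]
    have habs : ∀ x : p, ‖f₀lin x‖ ≤ (γ / r₀) * ‖x‖ := by
      intro x
      obtain ⟨z, hz⟩ := x.2
      have hx : x = ⟨ι z, LinearMap.mem_range_self ι z⟩ := Subtype.ext hz.symm
      rw [hx, hf₀lin]
      have h1 : Λ (Φ z) ≤ γ / r₀ * ‖ι z‖ := hkey z
      have h2 : -(γ / r₀ * ‖ι z‖) ≤ Λ (Φ z) := by
        have h3 := hkey (-z)
        rw [map_neg Φ, map_neg Λ, map_neg ι, norm_neg] at h3
        linarith
      have hnx : ‖(⟨ι z, LinearMap.mem_range_self ι z⟩ : p)‖ = ‖ι z‖ := rfl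
      rw [hnx, Real.norm_eq_abs]
      rw [abs_le]
      exact ⟨h2, h1⟩
    set f₀ : p →L[ℝ] ℝ := LinearMap.mkContinuous f₀lin (γ / r₀) habs with hf₀cdef
    obtain ⟨g, hg_ext, hg_norm⟩ := exists_extension_norm_eq p f₀
    have hg_le : ‖g‖ ≤ γ / r₀ := by
      rw [hg_norm]
      exact LinearMap.mkContinuous_norm_le _ (by positivity) _
    have hgι : ∀ z, g (ι z) = Λ (Φ z) := by
      intro z
      have h1 := hg_ext ⟨ι z, LinearMap.mem_range_self ι z⟩
      rw [h1]
      exact hf₀lin z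
    set α' : ℝ := g (1, 0) with hα'def
    set ψlin : Γ → (X →ₗ[ℝ] ℝ) := fun l =>
      g.toLinearMap.comp ((LinearMap.inr ℝ ℝ (Γ → X)).comp
        (LinearMap.single ℝ (fun _ : Γ => X) l)) with hψlindef
    have hψlinv : ∀ l (x : X), ψlin l x = g (0, Pi.single l x) := fun l x => rfl
    have hns : ∀ (l : Γ) (x : X), ‖(((0:ℝ), Pi.single l x) : ℝ × (Γ → X))‖ = ‖x‖ := by
      intro l x
      have h1 : ‖(((0:ℝ), Pi.single l x) : ℝ × (Γ → X))‖
          = max ‖(0:ℝ)‖ ‖(Pi.single l x : Γ → X)‖ := Prod.norm_def _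
      rw [h1, norm_zero, Pi.norm_single]
      exact max_eq_right (norm_nonneg x)
    have hψbound : ∀ l (x : X), ‖ψlin l x‖ ≤ ‖g‖ * ‖x‖ := by
      intro l x
      rw [hψlinv]
      calc ‖g (0, Pi.single l x)‖ ≤ ‖g‖ * ‖(((0 : ℝ), Pi.single l x) : ℝ × (Γ → X))‖ :=
            g.le_opNorm _
        _ = ‖g‖ * ‖x‖ := by rw [hns l x]
    set ψ : Γ → (X →L[ℝ] ℝ) := fun l => LinearMap.mkContinuous (ψlin l) ‖g‖ (hψbound l)
      with hψdef
    have hψ : ∀ l (x : X), ψ l x = g (0, Pi.single l x) := fun l x => rfl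
    have hg_exp : ∀ (s : ℝ) (x : Γ → X), g (s, x) = s * α' + ∑ l, ψ l (x l) := by
      intro s x
      have hx : ((s, x) : ℝ × (Γ → X))
          = s • ((1:ℝ), (0 : Γ → X)) + ∑ l, ((0:ℝ), Pi.single l (x l)) := by
        rw [Prod.ext_iff]
        constructor
        · simp [Prod.fst_sum]
        · simp [Prod.snd_sum, Finset.univ_sum_single]
      rw [hx, map_add, map_smul, map_sum, smul_eq_mul, ← hα'def]
      exact congrArg (s * α' + ·) (Finset.sum_congr rfl fun l _ => (hψ l (x l)).symm)
    have hR3 : |α'| + ∑ l, ‖ψ l‖ ≤ γ / r₀ := by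
      refine le_of_forall_pos_le_add ?_
      intro η hη
      set n : ℝ := (Fintype.card Γ : ℝ) with hndef
      have hn0 : 0 ≤ n := Nat.cast_nonneg _
      set η' : ℝ := η / (n + 1) with hη'def
      have hη' : 0 < η' := by positivity
      choose xs hxs1 hxs2 using fun l => near_norm (ψ l) hη'
      set σ₀ : ℝ := if 0 ≤ α' then 1 else -1 with hσdef
      have hσabs : σ₀ * α' = |α'| := by
        rcases le_or_gt 0 α' with h | h
        · rw [hσdef, if_pos h, one_mul, abs_of_nonneg h]
        · rw [hσdef, if_neg (not_le.mpr h), neg_one_mul, abs_of_neg h]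
      have hval : g (σ₀, xs) = σ₀ * α' + ∑ l, ψ l (xs l) := hg_exp _ _
      have hnorm1 : ‖((σ₀, xs) : ℝ × (Γ → X))‖ ≤ 1 := by
        rw [Prod.norm_def]
        apply max_le
        · rw [Real.norm_eq_abs]
          rcases le_or_gt 0 α' with h | h
          · rw [hσdef, if_pos h]; simp
          · rw [hσdef, if_neg (not_le.mpr h)]; simp
        · exact (pi_norm_le_iff_of_nonneg zero_le_one).mpr hxs1
      have hgb : g (σ₀, xs) ≤ ‖g‖ := by
        calc g (σ₀, xs) ≤ ‖g (σ₀, xs)‖ := le_abs_self _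
          _ ≤ ‖g‖ * ‖((σ₀, xs) : ℝ × (Γ → X))‖ := g.le_opNorm _
          _ ≤ ‖g‖ * 1 := by gcongr
          _ = ‖g‖ := mul_one _
      have hsum2 : ∑ l, (‖ψ l‖ - η') ≤ ∑ l, ψ l (xs l) :=
        Finset.sum_le_sum fun l _ => hxs2 l
      have hsum3 : ∑ l, (‖ψ l‖ - η') = (∑ l, ‖ψ l‖) - n * η' := by
        rw [Finset.sum_sub_distrib, Finset.sum_const, Finset.card_univ, nsmul_eq_mul]
      have hfin : n * η' ≤ η := by
        rw [hη'def]
        have h1 : n * (η / (n + 1)) ≤ (n + 1) * (η / (n + 1)) :=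
          mul_le_mul_of_nonneg_right (by linarith) (by positivity)
        have h2 : (n + 1) * (η / (n + 1)) = η := by field_simp
        linarith
      have hchain : |α'| + ((∑ l, ‖ψ l‖) - n * η') ≤ ‖g‖ := by
        rw [← hσabs, ← hsum3]
        calc σ₀ * α' + ∑ l, (‖ψ l‖ - η') ≤ σ₀ * α' + ∑ l, ψ l (xs l) := by linarith [hsum2]
          _ = g (σ₀, xs) := hval.symm
          _ ≤ ‖g‖ := hgb
      linarith [hg_le]
    -- expansion of Λ
    set μlin : Fin m → ((Γ → ℝ) →ₗ[ℝ] ℝ) := fun i =>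
      Λ.toLinearMap.comp ((LinearMap.inr ℝ ℝ (Fin m → Γ → ℝ)).comp
        (LinearMap.single ℝ (fun _ : Fin m => Γ → ℝ) i)) with hμdef
    have hμv : ∀ i (v : Γ → ℝ), μlin i v = Λ (0, Pi.single i v) := fun i v => rfl
    set α : ℝ := Λ (1, 0) with hαdef
    have hΛ_exp : ∀ (s : ℝ) (q : Fin m → Γ → ℝ),
        Λ (s, q) = s * α + ∑ i, μlin i (q i) := by
      intro s q
      have hx : ((s, q) : ℝ × (Fin m → Γ → ℝ))
          = s • ((1:ℝ), (0 : Fin m → Γ → ℝ)) + ∑ i, ((0:ℝ), Pi.single i (q i)) := by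
        rw [Prod.ext_iff]
        constructor
        · simp [Prod.fst_sum]
        · simp [Prod.snd_sum, Finset.univ_sum_single]
      rw [hx, map_add, map_smul, map_sum, smul_eq_mul, ← hαdef]
      exact congrArg (s * α + ·) (Finset.sum_congr rfl fun i _ => (hμv i (q i)).symm)
    set a : Fin m → Γ → ℝ := fun i l => μlin i (Pi.single l 1) with hadef
    have hμ_exp : ∀ i (v : Γ → ℝ), μlin i v = ∑ l, v l * a i l :=
      fun i v => pi_dual_expand (μlin i) v
    -- R1
    have hι10 : ι ((1:ℝ), (0 : Fin m → X)) = ((1:ℝ), fun l => b l) := by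
      rw [hι]
      rw [Prod.ext_iff]
      refine ⟨rfl, funext fun l => ?_⟩
      show A l ((1:ℝ), (0 : Fin m → X)) = b l
      rw [hA]
      simp
    have hΦ10 : Φ ((1:ℝ), (0 : Fin m → X)) = ((1:ℝ), (0 : Fin m → Γ → ℝ)) := by
      rw [hΦ]
      rw [Prod.ext_iff]
      refine ⟨rfl, funext fun i => ?_⟩
      simp
    have hR1 : α = α' + ∑ l, ψ l (b l) := by
      have h1 := hgι ((1:ℝ), (0 : Fin m → X))
      rw [hι10, hΦ10, hg_exp, one_mul, ← hαdef] at h1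
      exact h1.symm
    -- R2
    have hR2 : ∀ i (x : X), μlin i (M x) = ∑ l, t l i * ψ l x := by
      intro i x
      have e3 : ι ((0:ℝ), Pi.single i x) = ((0:ℝ), fun l => t l i • x) := by
        rw [hι]
        rw [Prod.ext_iff]
        refine ⟨rfl, funext fun l => ?_⟩
        show A l ((0:ℝ), Pi.single i x) = t l i • x
        rw [hA]
        show (0:ℝ) • b l + ∑ i', t l i' • (Pi.single i x : Fin m → X) i' = t l i • x
        rw [zero_smul, zero_add, Finset.sum_eq_single i]
        · rw [Pi.single_eq_same]
        · intro i' _ hne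
          rw [Pi.single_eq_of_ne hne, smul_zero]
        · intro h; exact absurd (Finset.mem_univ i) h
      have e1 : Φ ((0:ℝ), Pi.single i x) = ((0:ℝ), Pi.single i (M x)) := by
        rw [hΦ]
        rw [Prod.ext_iff]
        refine ⟨rfl, funext fun i' => ?_⟩
        show M ((Pi.single i x : Fin m → X) i') = (Pi.single i (M x) : Fin m → Γ → ℝ) i'
        rcases eq_or_ne i' i with rfl | hne
        · rw [Pi.single_eq_same, Pi.single_eq_same]
        · rw [Pi.single_eq_of_ne hne, Pi.single_eq_of_ne hne, map_zero]
      have h1 := hgι ((0:ℝ), Pi.single i x)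
      rw [e3, e1, hg_exp, zero_mul, zero_add] at h1
      have h2 : ∑ l, ψ l (t l i • x) = ∑ l, t l i * ψ l x :=
        Finset.sum_congr rfl fun l _ => by rw [map_smul, smul_eq_mul]
      rw [h2, ← hμv] at h1
      exact h1.symm
    -- transport through φ
    have hΘ : ∀ i, (∑ l, a i l • f l : X →L[ℝ] ℝ) = ∑ l, t l i • ψ l := by
      intro i
      ext x
      simp only [ContinuousLinearMap.sum_apply, ContinuousLinearMap.smul_apply, smul_eq_mul]
      rw [← hR2 i x, hμ_exp]
      exact Finset.sum_congr rfl fun l _ => by rw [hM]; ring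
    have hstep1 : ∀ i, (φ (∑ l, a i l • f l)) (yv i) = ∑ l, t l i * (φ (ψ l)) (yv i) := by
      intro i
      rw [hΘ i, map_sum]
      simp only [map_smul, ContinuousLinearMap.sum_apply, ContinuousLinearMap.smul_apply,
        smul_eq_mul]
    have hstep2 : ∑ i, ∑ l, t l i * (φ (ψ l)) (yv i)
        = ∑ l, (φ (ψ l)) (∑ i, t l i • yv i) := by
      rw [Finset.sum_comm]
      refine Finset.sum_congr rfl fun l _ => ?_
      rw [map_sum]
      exact Finset.sum_congr rfl fun i _ => by rw [map_smul, smul_eq_mul]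
    have hΛc : Λ c = α + ∑ i, (φ (∑ l, a i l • f l)) (yv i) := by
      rw [hcdef, hΛ_exp, one_mul]
      congr 1
      refine Finset.sum_congr rfl fun i _ => ?_
      rw [hμ_exp]
      rw [map_sum]
      simp only [map_smul, ContinuousLinearMap.sum_apply, ContinuousLinearMap.smul_apply,
        smul_eq_mul]
      exact Finset.sum_congr rfl fun l _ => mul_comm _ _
    have hφb : ∀ l, ψ l (b l) = (φ (ψ l)) ((b l : Y)) := fun l => ((hφ (ψ l)).1 (b l)).symm
    have hΛc2 : Λ c = α' + ∑ l, (φ (ψ l)) ((b l : Y) + ∑ i, t l i • yv i) := by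
      rw [hΛc, hR1]
      have h3 : ∑ i, (φ (∑ l, a i l • f l)) (yv i)
          = ∑ l, (φ (ψ l)) (∑ i, t l i • yv i) := by
        rw [← hstep2]
        exact Finset.sum_congr rfl fun i _ => hstep1 i
      rw [h3, add_assoc, ← Finset.sum_add_distrib]
      congr 1
      refine Finset.sum_congr rfl fun l _ => ?_
      rw [hφb, ← map_add]
    have hbound : Λ c ≤ γ / r₀ := by
      rw [hΛc2]
      have h4 : ∑ l, (φ (ψ l)) ((b l : Y) + ∑ i, t l i • yv i) ≤ ∑ l, ‖ψ l‖ := by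
        refine Finset.sum_le_sum fun l _ => ?_
        calc (φ (ψ l)) ((b l : Y) + ∑ i, t l i • yv i)
            ≤ ‖(φ (ψ l)) ((b l : Y) + ∑ i, t l i • yv i)‖ := le_abs_self _
          _ ≤ ‖φ (ψ l)‖ * ‖(b l : Y) + ∑ i, t l i • yv i‖ := (φ (ψ l)).le_opNorm _
          _ ≤ ‖φ (ψ l)‖ * 1 := mul_le_mul_of_nonneg_left (hP l) (norm_nonneg _)
          _ = ‖ψ l‖ := by rw [mul_one, (hφ (ψ l)).2]
      have h5 : α' ≤ |α'| := le_abs_self _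
      linarith [hR3]
    have h6 : γ / r₀ < γ := div_lt_self hγpos hr₀1
    linarith [hγc]
  -- Step B: target vectors lie in the range of M
  have hcV : ∀ i : Fin m, (fun l => φ (f l) (yv i)) ∈ LinearMap.range M := by
    intro i
    by_contra hnot
    have hq : (LinearMap.range M).mkQ (fun l => φ (f l) (yv i)) ≠ 0 := by
      rw [Submodule.mkQ_apply, Ne, Submodule.Quotient.mk_eq_zero]
      exact hnot
    obtain ⟨ℓ', hℓ'⟩ : ∃ ℓ' : Module.Dual ℝ ((Γ → ℝ) ⧸ LinearMap.range M),
        ℓ' ((LinearMap.range M).mkQ (fun l => φ (f l) (yv i))) ≠ 0 := by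
      by_contra hall
      push_neg at hall
      exact hq ((Module.forall_dual_apply_eq_zero_iff ℝ _).mp hall)
    set ℓ : (Γ → ℝ) →ₗ[ℝ] ℝ := ℓ'.comp (LinearMap.range M).mkQ with hℓdef
    have hℓV : ∀ x : X, ℓ (M x) = 0 := by
      intro x
      have h1 : (LinearMap.range M).mkQ (M x) = 0 := by
        rw [Submodule.mkQ_apply, Submodule.Quotient.mk_eq_zero]
        exact LinearMap.mem_range_self M x
      show ℓ' ((LinearMap.range M).mkQ (M x)) = 0
      rw [h1, map_zero]
    have hzero : (∑ l, ℓ (Pi.single l 1) • f l : X →L[ℝ] ℝ) = 0 := by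
      ext x
      simp only [ContinuousLinearMap.sum_apply, ContinuousLinearMap.smul_apply, smul_eq_mul,
        ContinuousLinearMap.zero_apply]
      calc ∑ l, ℓ (Pi.single l 1) * f l x
          = ∑ l, (M x) l * ℓ (Pi.single l 1) :=
            Finset.sum_congr rfl fun l _ => by rw [hM]; ring
        _ = ℓ (M x) := (pi_dual_expand ℓ (M x)).symm
        _ = 0 := hℓV x
    have hφzero : ∑ l, φ (f l) (yv i) * ℓ (Pi.single l 1) = 0 := by
      have h3 : φ (∑ l, ℓ (Pi.single l 1) • f l) = φ 0 := congrArg _ hzero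
      rw [map_sum, map_zero] at h3
      have h4 := congrArg (fun (F : Y →L[ℝ] ℝ) => F (yv i)) h3
      simp only [ContinuousLinearMap.sum_apply, map_smul, ContinuousLinearMap.smul_apply,
        smul_eq_mul, ContinuousLinearMap.zero_apply] at h4
      calc ∑ l, φ (f l) (yv i) * ℓ (Pi.single l 1)
          = ∑ l, ℓ (Pi.single l 1) * φ (f l) (yv i) :=
            Finset.sum_congr rfl fun l _ => mul_comm _ _
        _ = 0 := h4
    apply hℓ'
    show ℓ (fun l => φ (f l) (yv i)) = 0
    rw [pi_dual_expand]
    exact hφzero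
  obtain ⟨V', hV'⟩ := Submodule.exists_isCompl (LinearMap.range M)
  set π : (Γ → ℝ) →ₗ[ℝ] (LinearMap.range M) :=
    (LinearMap.range M).linearProjOfIsCompl V' hV' with hπdef
  set bV := Module.finBasis ℝ (LinearMap.range M) with hbVdef
  have hpreex : ∀ v : LinearMap.range M, ∃ x : X, M x = (v : Γ → ℝ) := fun v => v.2
  choose pre hpre using fun j => hpreex (bV j)
  set ρ : (LinearMap.range M) →ₗ[ℝ] X := bV.constr ℝ pre with hρdef
  have hMρ : ∀ v : LinearMap.range M, M (ρ v) = (v : Γ → ℝ) := by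
    intro v
    have h1 : M.comp ρ = (LinearMap.range M).subtype := by
      apply bV.ext
      intro j
      rw [LinearMap.comp_apply, hρdef, Module.Basis.constr_basis]
      exact hpre j
    exact DFunLike.congr_fun h1 v
  set D : (ℝ × (Fin m → Γ → ℝ)) →ₗ[ℝ] (ℝ × (Fin m → X)) :=
    (LinearMap.fst ℝ ℝ (Fin m → Γ → ℝ)).prod
      (LinearMap.pi fun i => (ρ.comp π).comp
        ((LinearMap.proj i).comp (LinearMap.snd ℝ ℝ (Fin m → Γ → ℝ)))) with hDdef
  have hD : ∀ q : ℝ × (Fin m → Γ → ℝ), D q = (q.1, fun i => ρ (π (q.2 i))) := fun q => rfl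
  have hKl : ∀ l : Γ, ∃ K : ℝ, 0 ≤ K ∧ ∀ q, ‖(A l) (D q)‖ ≤ K * ‖q‖ := by
    intro l
    refine ⟨‖LinearMap.toContinuousLinearMap ((A l).comp D)‖,
      ContinuousLinearMap.opNorm_nonneg _, fun q => ?_⟩
    exact (LinearMap.toContinuousLinearMap ((A l).comp D)).le_opNorm q
  choose K hK0 hK using hKl
  set Ktot : ℝ := (∑ l, K l) + 1 with hKtotdef
  have hKtot_pos : 0 < Ktot := by
    have h1 : 0 ≤ ∑ l, K l := Finset.sum_nonneg fun l _ => hK0 l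
    rw [hKtotdef]; linarith
  have hKl_le : ∀ l, K l ≤ Ktot := by
    intro l
    have h1 : K l ≤ ∑ l', K l' := Finset.single_le_sum (fun l' _ => hK0 l') (Finset.mem_univ l)
    rw [hKtotdef]; linarith
  set η : ℝ := (r₁ - r₀) / Ktot with hηdef
  have hη : 0 < η := div_pos (by linarith) hKtot_pos
  obtain ⟨q', hq'mem, hq'dist⟩ := Metric.mem_closure_iff.mp hstepA η hη
  obtain ⟨z₁, hz₁B, hz₁⟩ := hq'mem
  have he_norm : ‖c - q'‖ < η := by rw [← dist_eq_norm]; exact hq'dist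
  have heV : ∀ i, (c - q').2 i ∈ LinearMap.range M := by
    intro i
    have h1 : (c - q').2 i = (fun l => φ (f l) (yv i)) - M (z₁.2 i) := by
      rw [← hz₁]
      rfl
    rw [h1]
    exact Submodule.sub_mem _ (hcV i) (LinearMap.mem_range_self M _)
  have hπV : ∀ i, M (ρ (π ((c - q').2 i))) = (c - q').2 i := by
    intro i
    have h1 : π ((c - q').2 i) = ⟨(c - q').2 i, heV i⟩ :=
      Submodule.linearProjOfIsCompl_apply_left hV' ⟨(c - q').2 i, heV i⟩
    rw [h1, hMρ]
  have hΦD : Φ (D (c - q')) = c - q' := by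
    rw [hΦ, hD]
    rw [Prod.ext_iff]
    exact ⟨rfl, funext fun i => hπV i⟩
  have h1 : Φ (z₁ + D (c - q')) = c := by
    rw [map_add, hz₁, hΦD]
    abel
  refine ⟨(z₁ + D (c - q')).2, ?_, ?_⟩
  · intro l i
    exact congrFun (congrFun (congrArg (fun (w : ℝ × (Fin m → Γ → ℝ)) => w.2) h1) i) l
  · intro l
    have hs1 : (z₁ + D (c - q')).1 = 1 := congrArg Prod.fst h1
    have h2 : b l + ∑ i, t l i • (z₁ + D (c - q')).2 i = A l (z₁ + D (c - q')) := by
      rw [hA, hs1, one_smul]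
    rw [h2, map_add]
    calc ‖A l z₁ + A l (D (c - q'))‖ ≤ ‖A l z₁‖ + ‖A l (D (c - q'))‖ := norm_add_le _ _
      _ ≤ r₀ + K l * ‖c - q'‖ := add_le_add (hz₁B.2 l) (hK l _)
      _ ≤ r₀ + Ktot * η := by
          have h3 := mul_le_mul (hKl_le l) he_norm.le (norm_nonneg _) hKtot_pos.le
          linarith
      _ = r₁ := by rw [hηdef]; field_simp; ring

end Aux

set_option maxHeartbeats 4000000 in
set_option synthInstance.maxHeartbeats 1000000 in
theorem strictIdeal_isSuperIdeal
    (Y : Type*) [NormedAddCommGroup Y] [NormedSpace ℝ Y] [CompleteSpace Y]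
    (X : Subspace ℝ Y) (hXc : IsClosed (X : Set Y))
    (φ : (X →L[ℝ] ℝ) →L[ℝ] (Y →L[ℝ] ℝ))
    (hφ : IsHahnBanachExtensionOperator X φ)
    (h1n : IsOneNorming (Set.range (fun f => φ f))) :
    IsSuperIdeal X := by
  classical
  intro ε hε E hE
  haveI := hE
  -- parameters
  set δ : ℝ := ε / (4 * (1 + ε)) with hδdef
  have hδpos : 0 < δ := by positivity
  have hδε : δ * (1 + ε) = ε / 4 := by rw [hδdef]; field_simp
  have hδ1 : δ < 1 := by
    rw [hδdef, div_lt_one (by positivity)]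
    nlinarith
  -- complement decomposition inside E
  set XE : Submodule ℝ E := Submodule.comap E.subtype X with hXEdef
  obtain ⟨E₁, hcompl⟩ := Submodule.exists_isCompl XE
  set prX : E →ₗ[ℝ] XE := XE.linearProjOfIsCompl E₁ hcompl with hprXdef
  set prW : E →ₗ[ℝ] E₁ := E₁.linearProjOfIsCompl XE hcompl.symm with hprWdef
  set m : ℕ := Module.finrank ℝ E₁ with hmdef
  set w : Module.Basis (Fin m) ℝ E₁ := Module.finBasis ℝ E₁ with hwdef
  set yv : Fin m → Y := fun i => ((w i : E) : Y) with hyvdef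
  -- inclusion of XE into X
  have hXEmem : ∀ x : XE, ((x : E) : Y) ∈ X := fun x => Submodule.mem_comap.mp x.2
  set inclXE : XE →ₗ[ℝ] X :=
    { toFun := fun x => ⟨((x : E) : Y), hXEmem x⟩
      map_add' := fun x y => by apply Subtype.ext; simp
      map_smul' := fun r x => by apply Subtype.ext; simp } with hincldef
  have hincl : ∀ x : XE, ((inclXE x : X) : Y) = ((x : E) : Y) := fun x => rfl
  -- decomposition
  have hdecomp : ∀ e : E, ((prX e : E) : Y) + ((prW e : E) : Y) = (e : Y) := by
    intro e
    have h1 : ((prX e : E)) + (prW e : E) = e := Submodule.projection_add_projection_eq_self hcompl e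
    have h2 := congrArg (fun v : E => (v : Y)) h1
    simpa using h2
  have hprW_repr : ∀ e : E, ((prW e : E) : Y) = ∑ i, w.repr (prW e) i • yv i := by
    intro e
    conv_lhs => rw [← Module.Basis.sum_repr w (prW e)]
    push_cast
    rfl
  -- finite δ-net of the unit sphere of E
  have hsph : IsCompact (sphere (0:E) 1) := isCompact_sphere _ _
  have hcover : sphere (0:E) 1 ⊆ ⋃ q ∈ sphere (0:E) 1, ball q δ := fun q hq =>
    mem_biUnion hq (mem_ball_self hδpos)
  obtain ⟨s, hs_sub, hs_fin, hs_cov⟩ :=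
    hsph.elim_finite_subcover_image (fun q _ => isOpen_ball) hcover
  haveI := hs_fin.fintype
  -- index type
  set Γ := (↥s) ⊕ (Fin m) with hΓdef
  set p : Γ → E := Sum.elim (fun q => (q : E)) (fun i => ‖((w i : E))‖⁻¹ • (w i : E))
    with hpdef
  have hwne : ∀ i : Fin m, ((w i : E)) ≠ 0 := by
    intro i h
    exact w.ne_zero i (by exact_mod_cast Subtype.ext h)
  have hp_norm : ∀ l, ‖p l‖ = 1 := by
    intro l
    rcases l with q | i
    · have : (q : E) ∈ sphere (0:E) 1 := hs_sub q.2
      simpa [hpdef] using mem_sphere_zero_iff_norm.mp this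
    · show ‖‖((w i : E))‖⁻¹ • ((w i : E))‖ = 1
      rw [norm_smul, norm_inv, norm_norm]
      exact inv_mul_cancel₀ (norm_ne_zero_iff.mpr (hwne i))
  set b : Γ → X := fun l => inclXE (prX (p l)) with hbdef
  set t : Γ → Fin m → ℝ := fun l i => w.repr (prW (p l)) i with htdef
  -- the point decomposition
  have hPl : ∀ l, (b l : Y) + ∑ i, t l i • yv i = ((p l : E) : Y) := by
    intro l
    rw [hincl, htdef, ← hprW_repr]
    exact hdecomp (p l)
  have hP : ∀ l, ‖(b l : Y) + ∑ i, t l i • yv i‖ ≤ 1 := by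
    intro l
    rw [hPl]
    have : ‖((p l : E) : Y)‖ = ‖p l‖ := rfl
    rw [this, hp_norm]
  -- norming functionals
  have hfex : ∀ l : Γ, ∃ fl : X →L[ℝ] ℝ, ‖φ fl‖ ≤ 1 ∧ 1 - δ < |φ fl ((p l : E) : Y)| := by
    intro l
    have h1 := h1n ((p l : E) : Y)
    have h2 : ‖((p l : E) : Y)‖ = 1 := by
      have : ‖((p l : E) : Y)‖ = ‖p l‖ := rfl
      rw [this, hp_norm]
    rw [h2] at h1
    have hne : {r : ℝ | ∃ v ∈ Set.range (fun f => φ f), ‖v‖ ≤ 1 ∧ r = |v ((p l : E) : Y)|}.Nonempty := by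
      refine ⟨|(φ 0 : Y →L[ℝ] ℝ) ((p l : E) : Y)|, ⟨φ 0, ⟨0, rfl⟩, ?_, rfl⟩⟩
      rw [map_zero]
      simp
    have h3 : (1:ℝ) - δ < sSup {r : ℝ | ∃ v ∈ Set.range (fun f => φ f), ‖v‖ ≤ 1 ∧ r = |v ((p l : E) : Y)|} := by
      rw [← h1]; linarith
    obtain ⟨r, hrmem, hrgt⟩ := exists_lt_of_lt_csSup hne h3
    obtain ⟨v, ⟨fl, hfl⟩, hv1, hv2⟩ := hrmem
    have hfl' : φ fl = v := hfl
    refine ⟨fl, ?_, ?_⟩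
    · rw [hfl']; exact hv1
    · rw [hfl', ← hv2]; exact hrgt
  choose f hf1 hf2 using hfex
  -- injectivity hypothesis
  have hinj : ∀ u : Fin m → X, (∀ l, ∑ i, t l i • u i = 0) → u = 0 := by
    intro u hu
    funext i
    have h1 := hu (Sum.inr i)
    have hti : ∀ i', t (Sum.inr i) i' = ‖((w i : E))‖⁻¹ * (w.repr (w i)) i' := by
      intro i'
      rw [htdef]
      show w.repr (prW (‖((w i : E))‖⁻¹ • (w i : E))) i' = _
      rw [map_smul]
      have h2 : prW ((w i : E)) = w i :=
        Submodule.linearProjOfIsCompl_apply_left hcompl.symm (w i)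
      rw [h2, map_smul]
      rfl
    have h3 : ∑ i', t (Sum.inr i) i' • u i' = ‖((w i : E))‖⁻¹ • u i := by
      rw [Finset.sum_congr rfl fun i' _ => by rw [hti i']]
      have h4 : ∀ i', (‖((w i : E))‖⁻¹ * (w.repr (w i)) i') • u i'
          = ‖((w i : E))‖⁻¹ • ((w.repr (w i)) i' • u i') := by
        intro i'; rw [mul_smul]
      rw [Finset.sum_congr rfl fun i' _ => h4 i', ← Finset.smul_sum]
      congr 1
      rw [Module.Basis.repr_self]
      rw [Finset.sum_eq_single i]
      · rw [Finsupp.single_eq_same, one_smul]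
      · intro i' _ hne
        rw [Finsupp.single_eq_of_ne hne, zero_smul]
      · intro h; exact absurd (Finset.mem_univ i) h
    rw [h3] at h1
    have h5 : u i = 0 := by
      have h6 := congrArg (fun v : X => (‖((w i : E))‖ : ℝ) • v) h1
      simp only [smul_smul, mul_inv_cancel₀ (norm_ne_zero_iff.mpr (hwne i)), one_smul,
        smul_zero] at h6
      exact h6
    simpa using h5
  -- apply the core existence lemma
  obtain ⟨u, hu_eq, hu_norm⟩ := core_exists φ hφ b t yv f hP hinj
    (r₁ := 1 + ε/2) (by linarith)
  -- build T
  set T : E →ₗ[ℝ] X := inclXE.comp prX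
      + ∑ i, LinearMap.smulRight ((w.coord i).comp prW) (u i) with hTdef
  have hT_apply : ∀ e : E, T e = inclXE (prX e) + ∑ i, w.repr (prW e) i • u i := by
    intro e
    rw [hTdef]
    simp [LinearMap.sum_apply, LinearMap.smulRight_apply, Module.Basis.coord_apply]
  -- fixing property
  have hfix : ∀ e : E, (e : Y) ∈ X → ((T e : X) : Y) = (e : Y) := by
    intro e he
    have heXE : e ∈ XE := Submodule.mem_comap.mpr (by simpa using he)
    have h1 : prX e = ⟨e, heXE⟩ :=
      Submodule.linearProjOfIsCompl_apply_left hcompl ⟨e, heXE⟩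
    have h2 : prW e = 0 :=
      Submodule.linearProjOfIsCompl_apply_right' hcompl.symm heXE
    rw [hT_apply, h1, h2, map_zero]
    simp [hincl]
  -- functional identity
  have hCL : ∀ (l : Γ) (e : E), f l (T e) = φ (f l) ((e : E) : Y) := by
    intro l e
    rw [hT_apply, map_add, map_sum]
    have h1 : f l (inclXE (prX e)) = φ (f l) (((prX e) : E) : Y) := by
      rw [← hincl]
      exact ((hφ (f l)).1 (inclXE (prX e))).symm
    have h2 : ∀ i, f l (w.repr (prW e) i • u i) = w.repr (prW e) i * φ (f l) (yv i) := by
      intro i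
      rw [map_smul, smul_eq_mul, hu_eq l i]
    rw [h1, Finset.sum_congr rfl fun i _ => h2 i]
    have h3 : φ (f l) (((prX e) : E) : Y) + ∑ i, w.repr (prW e) i * φ (f l) (yv i)
        = φ (f l) ((((prX e) : E) : Y) + ∑ i, w.repr (prW e) i • yv i) := by
      rw [map_add, map_sum]
      congr 1
      exact Finset.sum_congr rfl fun i _ => by rw [map_smul, smul_eq_mul]
    rw [h3, ← hprW_repr, hdecomp]
  -- norm bound at the points p l
  have hTp : ∀ l, ‖T (p l)‖ ≤ 1 + ε/2 := by
    intro l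
    rw [hT_apply]
    exact hu_norm l
  -- continuity
  set Tc : E →L[ℝ] X := LinearMap.toContinuousLinearMap T with hTcdef
  have hTc : ∀ e, Tc e = T e := fun _ => rfl
  have hcov' : ∀ e : E, ‖e‖ = 1 → ∃ l : Γ, ‖e - p l‖ < δ := by
    intro e he
    have h1 : e ∈ sphere (0:E) 1 := mem_sphere_zero_iff_norm.mpr he
    obtain ⟨q, hq, hqb⟩ := mem_iUnion₂.mp (hs_cov h1)
    refine ⟨Sum.inl ⟨q, hq⟩, ?_⟩
    rw [← dist_eq_norm]
    exact mem_ball.mp hqb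
  -- upper bound
  have hub2 : ∀ e : E, ‖Tc e‖ ≤ (1 + ε/2 + ‖Tc‖ * δ) * ‖e‖ := by
    have hub : ∀ e : E, ‖e‖ = 1 → ‖Tc e‖ ≤ 1 + ε/2 + ‖Tc‖ * δ := by
      intro e he
      obtain ⟨l, hl⟩ := hcov' e he
      have h1 : Tc e = Tc (p l) + Tc (e - p l) := by rw [← map_add]; congr 1; abel
      calc ‖Tc e‖ = ‖Tc (p l) + Tc (e - p l)‖ := by rw [h1]
        _ ≤ ‖Tc (p l)‖ + ‖Tc (e - p l)‖ := norm_add_le _ _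
        _ ≤ (1 + ε/2) + ‖Tc‖ * ‖e - p l‖ := by
            apply add_le_add
            · rw [hTc]; exact hTp l
            · exact Tc.le_opNorm _
        _ ≤ (1 + ε/2) + ‖Tc‖ * δ := by
            apply add_le_add_right
            exact mul_le_mul_of_nonneg_left hl.le (ContinuousLinearMap.opNorm_nonneg Tc)
    intro e
    rcases eq_or_ne e 0 with rfl | he
    · simp
    · have hne : ‖e‖ ≠ 0 := norm_ne_zero_iff.mpr he
      have h1 : ‖(‖e‖⁻¹ • e)‖ = 1 := by
        rw [norm_smul, norm_inv, norm_norm]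
        exact inv_mul_cancel₀ hne
      have h2 := hub _ h1
      rw [map_smul, norm_smul, norm_inv, norm_norm] at h2
      calc ‖Tc e‖ = ‖e‖ * (‖e‖⁻¹ * ‖Tc e‖) := by
            rw [← mul_assoc, mul_inv_cancel₀ hne, one_mul]
        _ ≤ ‖e‖ * (1 + ε/2 + ‖Tc‖ * δ) := mul_le_mul_of_nonneg_left h2 (norm_nonneg _)
        _ = (1 + ε/2 + ‖Tc‖ * δ) * ‖e‖ := mul_comm _ _
  have hTnorm : ‖Tc‖ ≤ 1 + ε/2 + ‖Tc‖ * δ := by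
    apply ContinuousLinearMap.opNorm_le_bound
    · have h0 := ContinuousLinearMap.opNorm_nonneg Tc
      positivity
    · exact hub2
  have hCle : ‖Tc‖ ≤ 1 + ε := by
    by_contra hC
    push_neg at hC
    have h1 : (0:ℝ) < 1 - δ := by linarith
    have h2 : (1 + ε) * (1 - δ) < ‖Tc‖ * (1 - δ) := mul_lt_mul_of_pos_right hC h1
    have h3 : ‖Tc‖ * (1 - δ) ≤ 1 + ε/2 := by nlinarith [hTnorm]
    have h4 : (1 + ε) * (1 - δ) = 1 + (3/4) * ε := by linear_combination -hδε
    linarith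
  refine ⟨T, hfix, fun e => ⟨?_, ?_⟩⟩
  · -- lower bound
    have hlow1 : ∀ e' : E, ‖e'‖ = 1 → 1 - 2*δ ≤ ‖T e'‖ := by
      intro e' he'
      obtain ⟨l, hl⟩ := hcov' e' he'
      have h1 : |φ (f l) ((e' : E) : Y)| ≤ ‖T e'‖ := by
        rw [← hCL l e']
        calc |f l (T e')| ≤ ‖f l‖ * ‖T e'‖ := (f l).le_opNorm _
          _ ≤ 1 * ‖T e'‖ := by
              apply mul_le_mul_of_nonneg_right _ (norm_nonneg _)
              rw [← (hφ (f l)).2]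
              exact hf1 l
          _ = ‖T e'‖ := one_mul _
      have h2 : |φ (f l) ((p l : E) : Y) - φ (f l) ((e' : E) : Y)| ≤ δ := by
        rw [← map_sub]
        have hcoe : ((p l : E) : Y) - ((e' : E) : Y) = (((p l - e' : E)) : Y) := by push_cast; ring
        rw [hcoe]
        calc |φ (f l) ((p l - e' : E) : Y)| ≤ ‖φ (f l)‖ * ‖((p l - e' : E) : Y)‖ :=
              (φ (f l)).le_opNorm _
          _ ≤ 1 * δ := by
              apply mul_le_mul (hf1 l) _ (norm_nonneg _) zero_le_one
              have h5 : ‖((p l - e' : E) : Y)‖ = ‖p l - e'‖ := rfl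
              rw [h5, norm_sub_rev]
              exact hl.le
          _ = δ := one_mul δ
      have h3 := hf2 l
      have h4 := abs_sub_abs_le_abs_sub (φ (f l) ((p l : E) : Y)) (φ (f l) ((e' : E) : Y))
      linarith
    rcases eq_or_ne e 0 with rfl | he
    · simp
    · have hne : ‖e‖ ≠ 0 := norm_ne_zero_iff.mpr he
      have h1 : ‖(‖e‖⁻¹ • e)‖ = 1 := by
        rw [norm_smul, norm_inv, norm_norm]; exact inv_mul_cancel₀ hne
      have h2 := hlow1 _ h1
      rw [map_smul, norm_smul, norm_inv, norm_norm] at h2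
      have h5 : (1 + ε)⁻¹ ≤ 1 - 2*δ := by
        rw [inv_eq_one_div, div_le_iff₀ (by positivity : (0:ℝ) < 1 + ε)]
        nlinarith [hδε]
      have h6 : (1 - 2*δ) * ‖e‖ ≤ ‖T e‖ := by
        have h7 := mul_le_mul_of_nonneg_left h2 (norm_nonneg e)
        calc (1-2*δ)*‖e‖ = ‖e‖ * (1-2*δ) := mul_comm _ _
          _ ≤ ‖e‖ * (‖e‖⁻¹ * ‖T e‖) := h7
          _ = ‖T e‖ := by rw [← mul_assoc, mul_inv_cancel₀ hne, one_mul]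
      calc (1+ε)⁻¹ * ‖e‖ ≤ (1-2*δ) * ‖e‖ := mul_le_mul_of_nonneg_right h5 (norm_nonneg _)
        _ ≤ ‖T e‖ := h6
  · calc ‖T e‖ = ‖Tc e‖ := rfl
      _ ≤ ‖Tc‖ * ‖e‖ := Tc.le_opNorm e
      _ ≤ (1 + ε) * ‖e‖ := mul_le_mul_of_nonneg_right hCle (norm_nonneg _)
end

section
/- Let c₀ denote the Banach space of real sequences converging to 0 with the supremum norm, and let X = {(aₙ)ₙ ∈ c₀ : a₀ = 0} be the kernel of the first coordinate functional. Then X is a super-ideal in c₀. -/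
universe u v

open Metric Set

local notation "c₀" => ZeroAtInftyContinuousMap ℕ ℝ

section SIPAux
set_option maxHeartbeats 1000000
set_option synthInstance.maxHeartbeats 400000
open Filter



/-- indicator function at a point, in c₀ -/
noncomputable def sipDD (m : ℕ) : c₀ :=
{ toFun := fun n => if n = m then (1:ℝ) else 0,
  continuous_toFun := continuous_of_discreteTopology,
  zero_at_infty' := by
    rw [cocompact_eq_cofinite]
    apply tendsto_const_nhds.congr'
    filter_upwards [(Set.finite_singleton m).compl_mem_cofinite] with n hn
    simp only [Set.mem_compl_iff, Set.mem_singleton_iff] at hn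
    simp [hn] }

@[simp] lemma sipDD_apply (m n : ℕ) : sipDD m n = if n = m then (1:ℝ) else 0 := rfl

/-- evaluation at a point, as a linear map -/
noncomputable def sipEV (n : ℕ) : c₀ →ₗ[ℝ] ℝ :=
{ toFun := fun f => f n, map_add' := fun _ _ => rfl, map_smul' := fun _ _ => rfl }

@[simp] lemma sipEV_apply (n : ℕ) (f : c₀) : sipEV n f = f n := rfl

lemma sip_abs_le (f : c₀) (n : ℕ) : |f n| ≤ ‖f‖ := by
  rw [← ZeroAtInftyContinuousMap.norm_toBCF_eq_norm]
  exact (f.toBCF.norm_coe_le_norm n).trans_eq' (by simp)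

lemma sip_norm_le (f : c₀) (C : ℝ) (hC : 0 ≤ C) (h : ∀ n, |f n| ≤ C) : ‖f‖ ≤ C := by
  rw [← ZeroAtInftyContinuousMap.norm_toBCF_eq_norm]
  exact BoundedContinuousFunction.norm_le hC |>.2 (by simpa using h)

lemma sip_coord_bound {V : Type*} [NormedAddCommGroup V] [NormedSpace ℝ V]
    [FiniteDimensional ℝ V] (f : V →ₗ[ℝ] ℝ) : ∃ C : ℝ, 0 ≤ C ∧ ∀ v, |f v| ≤ C * ‖v‖ := by
  refine ⟨‖LinearMap.toContinuousLinearMap f‖, norm_nonneg _, fun v => ?_⟩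
  simpa [Real.norm_eq_abs] using (LinearMap.toContinuousLinearMap f).le_opNorm v

lemma sip_exists_far (E : Subspace ℝ c₀) [FiniteDimensional ℝ E] (δ : ℝ) (hδ : 0 < δ) :
    ∃ M : ℕ, 1 ≤ M ∧ ∀ e : E, |(e : c₀) M| ≤ δ * ‖e‖ := by
  classical
  letI : Module.Free ℝ E := Module.Free.of_divisionRing ℝ E
  let b := Module.finBasis ℝ E
  choose C hC0 hC using fun i => sip_coord_bound (V := E) (b.coord i)
  have hC : ∀ (i) (e : E), |b.repr e i| ≤ C i * ‖e‖ := by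
    intro i e
    simpa [Module.Basis.coord_apply] using hC i e
  let g : ℕ → ℝ := fun n => ∑ i, C i * |(b i : c₀) n|
  have hg : Tendsto g atTop (nhds 0) := by
    have : Tendsto (fun n => ∑ i, C i * |(b i : c₀) n|) atTop
        (nhds (∑ i : Fin (Module.finrank ℝ E), (0:ℝ))) := by
      apply tendsto_finset_sum
      intro i _
      have h1 : Tendsto (fun n => ((b i : c₀) n : ℝ)) atTop (nhds 0) := by
        have := (b i : c₀).zero_at_infty'
        rwa [cocompact_eq_cofinite, Nat.cofinite_eq_atTop] at this
      simpa using (h1.abs.const_mul (C i)).congr (fun n => rfl)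
    simpa using this
  have hev : ∀ᶠ n in atTop, g n < δ := hg.eventually (gt_mem_nhds hδ)
  obtain ⟨M, hM1, hMg⟩ := ((eventually_ge_atTop 1).and hev).exists
  refine ⟨M, hM1, fun e => ?_⟩
  have hrepr : (e : c₀) M = ∑ i, b.repr e i * (b i : c₀) M := by
    have h0 : ((sipEV M).comp E.subtype) e
        = ((sipEV M).comp E.subtype) (∑ i, b.repr e i • b i) := by
      rw [Module.Basis.sum_repr]
    rw [map_sum] at h0
    simpa using h0
  calc |(e : c₀) M| ≤ ∑ i, |b.repr e i| * |(b i : c₀) M| := by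
        rw [hrepr]
        exact (Finset.abs_sum_le_sum_abs _ _).trans (le_of_eq (by simp [abs_mul]))
    _ ≤ ∑ i, (C i * ‖e‖) * |(b i : c₀) M| := by
        apply Finset.sum_le_sum
        intro i _
        exact mul_le_mul_of_nonneg_right (hC i e) (abs_nonneg _)
    _ = g M * ‖e‖ := by rw [Finset.sum_mul]; apply Finset.sum_congr rfl; intros; ring
    _ ≤ δ * ‖e‖ := mul_le_mul_of_nonneg_right hMg.le (norm_nonneg e)


end SIPAux

set_option maxHeartbeats 1000000 in
set_option synthInstance.maxHeartbeats 400000 in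
theorem ker_firstCoord_superIdeal_c0
    (X : Subspace ℝ (ZeroAtInftyContinuousMap ℕ ℝ))
    (hX : ∀ f : ZeroAtInftyContinuousMap ℕ ℝ, f ∈ X ↔ f 0 = 0) :
    IsSuperIdeal X := by
  intro ε hε E hEfd
  have h1ε : (0:ℝ) < 1 + ε := by linarith
  set δ : ℝ := ε / (1 + ε) with hδdef
  have hδ : 0 < δ := div_pos hε h1ε
  have hδε : δ ≤ ε := by
    rw [hδdef, div_le_iff₀ h1ε]; nlinarith
  have h1δ : 1 - δ = (1 + ε)⁻¹ := by
    rw [hδdef]; field_simp; ring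
  obtain ⟨M, hM1, hM⟩ := sip_exists_far E δ hδ
  have hM0 : M ≠ 0 := by omega
  let S : E →ₗ[ℝ] c₀ :=
    E.subtype + LinearMap.smulRight ((sipEV 0).comp E.subtype) (sipDD M - sipDD 0)
  have hS : ∀ (e : E) (n : ℕ), S e n = (e : c₀) n
      + (e : c₀) 0 * ((if n = M then 1 else 0) - (if n = 0 then 1 else 0)) := by
    intro e n
    simp [S, LinearMap.smulRight_apply, ZeroAtInftyContinuousMap.coe_add,
      ZeroAtInftyContinuousMap.coe_sub, smul_eq_mul]
  have hmem : ∀ e : E, S e ∈ X := by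
    intro e
    rw [hX]
    rw [hS e 0]
    simp [hM0, Ne.symm hM0]
  refine ⟨S.codRestrict X hmem, ?_, ?_⟩
  · intro e he
    have he0 : (e : c₀) 0 = 0 := (hX _).mp he
    show S e = (e : c₀)
    ext n
    rw [hS e n, he0]; ring
  · intro e
    have hTn : ‖S.codRestrict X hmem e‖ = ‖S e‖ := rfl
    rw [hTn]
    have hupper : ‖S e‖ ≤ (1 + ε) * ‖e‖ := by
      apply sip_norm_le _ _ (by positivity)
      intro n
      rw [hS e n]
      rcases eq_or_ne n 0 with h0 | h0
      · subst h0
        simp [Ne.symm hM0]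
        positivity
      rcases eq_or_ne n M with hm | hm
      · rw [if_pos hm, if_neg h0, sub_zero, mul_one, hm]
        have h1 := hM e
        have h2 : |(e : c₀) 0| ≤ ‖e‖ := sip_abs_le (e : c₀) 0
        calc |(e : c₀) M + (e : c₀) 0| ≤ |(e : c₀) M| + |(e : c₀) 0| := abs_add_le _ _
          _ ≤ δ * ‖e‖ + ‖e‖ := add_le_add h1 h2
          _ ≤ (1 + ε) * ‖e‖ := by nlinarith [norm_nonneg e]
      · simp only [if_neg h0, if_neg hm, sub_self, mul_zero, add_zero]
        have h1 : |(e : c₀) n| ≤ ‖e‖ := sip_abs_le (e : c₀) n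
        nlinarith [norm_nonneg e]
    have hlower : ‖e‖ ≤ ‖S e‖ + δ * ‖e‖ := by
      have key : ‖(e : c₀)‖ ≤ ‖S e‖ + δ * ‖e‖ := by
        apply sip_norm_le _ _ (by positivity)
        intro n
        rcases eq_or_ne n 0 with h0 | h0
        · subst h0
          have hSM : S e M = (e : c₀) M + (e : c₀) 0 := by
            rw [hS e M]; simp [hM0]
          have heq : (e : c₀) 0 = S e M - (e : c₀) M := by rw [hSM]; ring
          rw [heq]
          calc |S e M - (e : c₀) M| ≤ |S e M| + |(e : c₀) M| := abs_sub _ _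
            _ ≤ ‖S e‖ + δ * ‖e‖ := add_le_add (sip_abs_le _ _) (hM e)
        rcases eq_or_ne n M with hm | hm
        · rw [hm]
          have h1 := hM e
          have h2 : (0:ℝ) ≤ ‖S e‖ := norm_nonneg _
          linarith
        · have hSn : S e n = (e : c₀) n := by rw [hS e n]; simp [h0, hm]
          rw [← hSn]
          have h1 := sip_abs_le (S e) n
          nlinarith [mul_nonneg hδ.le (norm_nonneg e)]
      exact key
    constructor
    · have : (1 - δ) * ‖e‖ ≤ ‖S e‖ := by nlinarith
      rwa [h1δ] at this
    · exact hupper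
end

section
/- Let c₀ denote the Banach space of real sequences converging to 0 with the supremum norm, and let X = {(aₙ)ₙ ∈ c₀ : a₀ = 0} be the kernel of the first coordinate functional. Then X is not a strict ideal in c₀: for every Hahn-Banach extension operator φ : X* → c₀*, the range of φ is not 1-norming for c₀. -/
universe u v

open Metric Set

noncomputable def e0 : ZeroAtInftyContinuousMap ℕ ℝ :=
  ⟨⟨fun n => if n = 0 then 1 else 0, continuous_of_discreteTopology⟩, by
    rw [cocompact_eq_atTop]
    refine Filter.Tendsto.congr' ?_ tendsto_const_nhds
    filter_upwards [Filter.eventually_ge_atTop 1] with n hn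
    exact (if_neg (by omega)).symm⟩

@[simp] lemma e0_apply (n : ℕ) : e0 n = if n = 0 then 1 else 0 := rfl

lemma e0_norm_le : ‖e0‖ ≤ 1 := by
  rw [← ZeroAtInftyContinuousMap.norm_toBCF_eq_norm]
  refine BoundedContinuousFunction.norm_le (by norm_num) |>.2 fun n => ?_
  simp only [ZeroAtInftyContinuousMap.toBCF_apply]
  rw [e0_apply]
  split <;> simp

lemma key_norm (x : ZeroAtInftyContinuousMap ℕ ℝ) (hx : x 0 = 0) (t : ℝ) (ht : |t| ≤ ‖x‖) :
    ‖x + t • e0‖ ≤ ‖x‖ := by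
  rw [← ZeroAtInftyContinuousMap.norm_toBCF_eq_norm]
  refine BoundedContinuousFunction.norm_le (norm_nonneg x) |>.2 fun n => ?_
  simp only [ZeroAtInftyContinuousMap.toBCF_apply, ZeroAtInftyContinuousMap.add_apply,
    ZeroAtInftyContinuousMap.smul_apply, e0_apply, smul_eq_mul]
  rcases eq_or_ne n 0 with h | h
  · subst h; simpa [hx] using ht
  · rw [if_neg h]
    simpa using (ZeroAtInftyContinuousMap.norm_toBCF_eq_norm (f := x) ▸
      x.toBCF.norm_coe_le_norm n)

set_option maxHeartbeats 2000000 in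
set_option synthInstance.maxHeartbeats 1000000 in
theorem aux_not_one_norming {Y : Type*} [NormedAddCommGroup Y] [NormedSpace ℝ Y]
    (X : Subspace ℝ Y) (e : Y) (he1 : ‖e‖ ≤ 1) (he0 : e ≠ 0)
    (hkey : ∀ (x : X) (t : ℝ), |t| ≤ ‖(x : Y)‖ → ‖(x : Y) + t • e‖ ≤ ‖(x : Y)‖)
    (φ : (X →L[ℝ] ℝ) →L[ℝ] (Y →L[ℝ] ℝ))
    (hφ : IsHahnBanachExtensionOperator X φ) :
    ¬ IsOneNorming (Set.range (fun f => φ f)) := by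
  intro hnorm
  have key : ∀ f : X →L[ℝ] ℝ, φ f e = 0 := by
    intro f
    set g := φ f with hg
    set c := g e with hc
    obtain ⟨hext, hnrm⟩ := hφ f
    have hgnn : (0:ℝ) ≤ ‖g‖ := norm_nonneg g
    have hcle : |c| ≤ ‖g‖ := by
      calc |c| = ‖g e‖ := (Real.norm_eq_abs _).symm
        _ ≤ ‖g‖ * ‖e‖ := g.le_opNorm e
        _ ≤ ‖g‖ * 1 := by gcongr
        _ = ‖g‖ := mul_one _
    have hb : ∀ x : X, |f x| + |c| * ‖x‖ ≤ ‖g‖ * ‖x‖ := by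
      intro x
      have hxc : ‖(x : Y)‖ = ‖x‖ := (Submodule.coe_norm x).symm
      have h1 : ∀ t : ℝ, |t| ≤ ‖(x : Y)‖ → |f x + t * c| ≤ ‖g‖ * ‖(x : Y)‖ := by
        intro t ht
        have hkn := hkey x t ht
        have hval : g ((x : Y) + t • e) = f x + t * c := by
          rw [map_add, map_smul, hext x, smul_eq_mul]
        calc |f x + t * c| = ‖g ((x : Y) + t • e)‖ := by rw [hval]; exact (Real.norm_eq_abs _).symm
          _ ≤ ‖g‖ * ‖(x : Y) + t • e‖ := g.le_opNorm _
          _ ≤ ‖g‖ * ‖(x : Y)‖ := by gcongr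
      have h2 := abs_le.1 (h1 ‖(x : Y)‖ (by rw [abs_of_nonneg (norm_nonneg _)]))
      have h3 := abs_le.1 (h1 (-‖(x : Y)‖) (by rw [abs_neg, abs_of_nonneg (norm_nonneg _)]))
      rw [← hxc]
      rcases abs_cases (f x) with ⟨h, _⟩ | ⟨h, _⟩ <;>
        rcases abs_cases c with ⟨h', _⟩ | ⟨h', _⟩ <;>
        nlinarith [norm_nonneg (x : Y)]
    have hfn : ‖f‖ ≤ ‖g‖ - |c| := by
      refine f.opNorm_le_bound (by linarith) fun x => ?_
      have := hb x
      have hnn := norm_nonneg x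
      have hac := abs_nonneg c
      calc ‖f x‖ = |f x| := Real.norm_eq_abs _
        _ ≤ (‖g‖ - |c|) * ‖x‖ := by nlinarith
    rw [hnrm] at hfn
    exact abs_eq_zero.1 (le_antisymm (by linarith) (abs_nonneg c))
  have hS : {r : ℝ | ∃ v ∈ Set.range (fun f => φ f), ‖v‖ ≤ 1 ∧ r = |v e|} = {0} := by
    ext r
    constructor
    · rintro ⟨v, ⟨f, rfl⟩, -, rfl⟩
      simp [key f]
    · intro hr
      rw [Set.mem_singleton_iff] at hr
      subst hr
      refine ⟨φ 0, ⟨0, rfl⟩, ?_, ?_⟩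
      · rw [map_zero]; simp
      · rw [map_zero]; simp
  have h0 := hnorm e
  rw [hS, csSup_singleton] at h0
  exact he0 (norm_eq_zero.1 h0)

theorem ker_firstCoord_not_strictIdeal_c0
    (X : Subspace ℝ (ZeroAtInftyContinuousMap ℕ ℝ))
    (hX : ∀ f : ZeroAtInftyContinuousMap ℕ ℝ, f ∈ X ↔ f 0 = 0) :
    ∀ φ, IsHahnBanachExtensionOperator X φ →
        ¬ IsOneNorming (Set.range (fun f => φ f)) := by
  intro φ hφ
  refine aux_not_one_norming X e0 e0_norm_le ?_ ?_ φ hφ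
  · intro h
    have : e0 0 = (0 : ℝ) := by rw [h]; rfl
    simp at this
  · intro x t ht
    exact key_norm x ((hX x).1 x.2) t ht
end

section
/- Let X be a closed subspace of a Banach space Y such that X is a super-ideal in Y. If Y has the diameter 2 property (every non-empty relatively weakly open subset of the closed unit ball B_Y has diameter 2), then X has the diameter 2 property. -/
universe u v

open Metric Set

namespace SuperIdealProof

open Metric Set Filter Topology

section Weak

variable {Z : Type*} [NormedAddCommGroup Z] [NormedSpace ℝ Z]

lemma weak_nbhd {V : Set Z} (hV : @IsOpen (WeakSpace ℝ Z) _ V) {x₀ : Z} (hx : x₀ ∈ V) :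
    ∃ (I : Finset (Z →L[ℝ] ℝ)) (α : ℝ), 0 < α ∧
      {x : Z | ∀ f ∈ I, |f x - f x₀| < α} ⊆ V := by
  classical
  change @IsOpen Z (TopologicalSpace.induced (fun (x : Z) (y : Z →L[ℝ] ℝ) => (topDualPairing ℝ Z).flip x y) Pi.topologicalSpace) V at hV
  rw [isOpen_induced_iff] at hV
  obtain ⟨O, hO, rfl⟩ := hV
  rw [isOpen_pi_iff] at hO
  obtain ⟨I, u, hu, hsub⟩ := hO _ hx
  by_cases hI : I.Nonempty
  · choose r hr hball using fun f (hf : f ∈ I) =>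
      Metric.isOpen_iff.mp (hu f hf).1 _ (hu f hf).2
    refine ⟨I, I.inf' hI fun f => if hf : f ∈ I then r f hf else 1, ?_, ?_⟩
    · apply (Finset.lt_inf'_iff _).mpr
      intro f hf
      simp only [dif_pos hf]
      exact hr f hf
    · intro x hxmem
      apply hsub
      intro f hf
      have hf' : f ∈ I := hf
      apply hball f hf'
      rw [mem_ball, Real.dist_eq]
      calc |f x - f x₀| < _ := hxmem f hf'
        _ ≤ r f hf' := by
          have := Finset.inf'_le (f := fun f => if hf : f ∈ I then r f hf else 1) hf'
          rw [dif_pos hf'] at this; exact this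
  · refine ⟨I, 1, one_pos, fun x _ => hsub ?_⟩
    simp [Finset.not_nonempty_iff_eq_empty.mp hI]

lemma weak_open_set' {ι : Type*} (I : Finset ι) (g : ι → (Z →L[ℝ] ℝ)) (c : ι → ℝ) (β : ℝ) :
    @IsOpen (WeakSpace ℝ Z) _ {y : Z | ∀ i ∈ I, |g i y - c i| < β} := by
  have h : {y : Z | ∀ i ∈ I, |g i y - c i| < β}
      = ⋂ i ∈ I, (fun y : Z => g i y) ⁻¹' (ball (c i) β) := by
    ext y; simp [Real.dist_eq]
  rw [show @IsOpen (WeakSpace ℝ Z) _ {y : Z | ∀ i ∈ I, |g i y - c i| < β} = @IsOpen (WeakSpace ℝ Z) _ (⋂ i ∈ I, (fun y : Z => g i y) ⁻¹' (ball (c i) β)) from congrArg _ h]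
  apply isOpen_biInter_finset
  intro i _
  exact (WeakBilin.eval_continuous ((topDualPairing ℝ Z).flip) (g i)).isOpen_preimage
    _ isOpen_ball

end Weak

set_option linter.unusedSectionVars false

variable (Y : Type*) [NormedAddCommGroup Y] [NormedSpace ℝ Y]

noncomputable def idxU : Ultrafilter (Finset Y × ℕ) :=
  Ultrafilter.of ((atTop : Filter (Finset Y)) ×ˢ (atTop : Filter ℕ))

abbrev Esp (p : Finset Y × ℕ) : Subspace ℝ Y := Submodule.span ℝ (p.1 : Set Y)

noncomputable def eps (p : Finset Y × ℕ) : ℝ := ((p.2 : ℝ) + 1)⁻¹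

lemma eps_pos (p : Finset Y × ℕ) : 0 < eps Y p := by unfold eps; positivity

lemma eps_le_one (p : Finset Y × ℕ) : eps Y p ≤ 1 := by
  rw [eps, inv_le_one_iff₀]; right; linarith [Nat.cast_nonneg (α := ℝ) p.2]

lemma idxU_le : (idxU Y : Filter _) ≤ ((atTop : Filter (Finset Y)) ×ˢ (atTop : Filter ℕ)) :=
  Ultrafilter.of_le _

lemma ev_mem (y : Y) : ∀ᶠ p in (idxU Y : Filter _), y ∈ Esp Y p := by
  apply idxU_le Y
  have h : ∀ᶠ (s : Finset Y) in atTop, y ∈ Submodule.span ℝ (↑s : Set Y) := by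
    filter_upwards [Filter.eventually_ge_atTop ({y} : Finset Y)] with s hs
    exact Submodule.subset_span (by
      exact_mod_cast Finset.mem_of_subset hs (Finset.mem_singleton_self y))
  exact h.prod_inl _

lemma ev_eps {c : ℝ} (hc : 0 < c) : ∀ᶠ p in (idxU Y : Filter _), eps Y p < c := by
  apply idxU_le Y
  have h : ∀ᶠ (n : ℕ) in atTop, ((n : ℝ) + 1)⁻¹ < c := by
    obtain ⟨N, hN⟩ := exists_nat_gt c⁻¹
    filter_upwards [Filter.eventually_ge_atTop N] with n hn
    have h1 : c⁻¹ < (n : ℝ) + 1 := by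
      have : (N : ℝ) ≤ (n : ℝ) := by exact_mod_cast hn
      linarith
    have h2 : (0:ℝ) < (n : ℝ) + 1 := by positivity
    exact (inv_lt_comm₀ h2 hc).mpr h1
  exact h.prod_inr _

variable {Y}
variable {X : Subspace ℝ Y} (hX : IsSuperIdeal X)

noncomputable def Tp (p : Finset Y × ℕ) : (Esp Y p) →ₗ[ℝ] X :=
  (hX (eps Y p) (eps_pos Y p) (Esp Y p) inferInstance).choose

lemma Tp_fix (p : Finset Y × ℕ) :
    ∀ e : Esp Y p, (e : Y) ∈ X → ((Tp hX p e : X) : Y) = (e : Y) :=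
  (hX (eps Y p) (eps_pos Y p) (Esp Y p) inferInstance).choose_spec.1

lemma Tp_norm (p : Finset Y × ℕ) :
    ∀ e : Esp Y p, (1 + eps Y p)⁻¹ * ‖e‖ ≤ ‖Tp hX p e‖ ∧ ‖Tp hX p e‖ ≤ (1 + eps Y p) * ‖e‖ :=
  (hX (eps Y p) (eps_pos Y p) (Esp Y p) inferInstance).choose_spec.2

open Classical in
noncomputable def uf (f : X →L[ℝ] ℝ) (y : Y) (p : Finset Y × ℕ) : ℝ :=
  if h : y ∈ Esp Y p then f (Tp hX p ⟨y, h⟩) else 0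

lemma uf_bound (f : X →L[ℝ] ℝ) (y : Y) :
    ∀ᶠ p in (idxU Y : Filter _), |uf hX f y p| ≤ (1 + eps Y p) * (‖f‖ * ‖y‖) := by
  filter_upwards [ev_mem Y y] with p hp
  have hn : ‖(⟨y, hp⟩ : Esp Y p)‖ = ‖y‖ := rfl
  have h1 : |f (Tp hX p ⟨y, hp⟩)| ≤ ‖f‖ * ‖Tp hX p ⟨y, hp⟩‖ := by
    rw [← Real.norm_eq_abs]; exact f.le_opNorm _
  have h2 := (Tp_norm hX p ⟨y, hp⟩).2
  rw [hn] at h2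
  have h3 : ‖f‖ * ‖Tp hX p ⟨y, hp⟩‖ ≤ ‖f‖ * ((1 + eps Y p) * ‖y‖) :=
    mul_le_mul_of_nonneg_left h2 (norm_nonneg f)
  rw [uf, dif_pos hp]
  calc |f (Tp hX p ⟨y, hp⟩)| ≤ ‖f‖ * ((1 + eps Y p) * ‖y‖) := le_trans h1 h3
    _ = (1 + eps Y p) * (‖f‖ * ‖y‖) := by ring

lemma uf_lim (f : X →L[ℝ] ℝ) (y : Y) :
    ∃ l : ℝ, Tendsto (uf hX f y) (idxU Y : Filter _) (𝓝 l) := by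
  set C := 2 * (‖f‖ * ‖y‖) with hC
  have hev : ∀ᶠ p in (idxU Y : Filter _), uf hX f y p ∈ Icc (-C) C := by
    filter_upwards [uf_bound hX f y] with p h1
    have h2 : (1 + eps Y p) * (‖f‖ * ‖y‖) ≤ C := by
      rw [hC]
      apply mul_le_mul_of_nonneg_right _ (by positivity)
      linarith [eps_le_one Y p]
    rw [mem_Icc]
    constructor
    · linarith [neg_abs_le (uf hX f y p)]
    · linarith [le_abs_self (uf hX f y p)]
  have hle : ((idxU Y).map (uf hX f y) : Filter ℝ) ≤ 𝓟 (Icc (-C) C) := by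
    rw [Ultrafilter.coe_map, le_principal_iff, mem_map]
    exact hev
  obtain ⟨l, -, hl⟩ := isCompact_Icc.ultrafilter_le_nhds ((idxU Y).map (uf hX f y)) hle
  exact ⟨l, by rwa [Ultrafilter.coe_map] at hl⟩

noncomputable def gl (f : X →L[ℝ] ℝ) (y : Y) : ℝ := (uf_lim hX f y).choose

lemma gl_spec (f : X →L[ℝ] ℝ) (y : Y) :
    Tendsto (uf hX f y) (idxU Y : Filter _) (𝓝 (gl hX f y)) := (uf_lim hX f y).choose_spec

lemma gl_add (f : X →L[ℝ] ℝ) (y z : Y) : gl hX f (y + z) = gl hX f y + gl hX f z := by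
  refine tendsto_nhds_unique (gl_spec hX f (y + z)) ?_
  refine ((gl_spec hX f y).add (gl_spec hX f z)).congr' ?_
  filter_upwards [ev_mem Y y, ev_mem Y z] with p hy hz
  have hyz : y + z ∈ Esp Y p := add_mem hy hz
  have he : (⟨y + z, hyz⟩ : Esp Y p) = ⟨y, hy⟩ + ⟨z, hz⟩ := rfl
  simp only [uf, dif_pos hy, dif_pos hz, dif_pos hyz, he, map_add]

lemma gl_smul (f : X →L[ℝ] ℝ) (c : ℝ) (y : Y) : gl hX f (c • y) = c * gl hX f y := by
  refine tendsto_nhds_unique (gl_spec hX f (c • y)) ?_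
  refine ((gl_spec hX f y).const_mul c).congr' ?_
  filter_upwards [ev_mem Y y] with p hy
  have hcy : c • y ∈ Esp Y p := Submodule.smul_mem _ c hy
  have he : (⟨c • y, hcy⟩ : Esp Y p) = c • ⟨y, hy⟩ := rfl
  simp only [uf, dif_pos hy, dif_pos hcy, he, map_smul, smul_eq_mul]

lemma gl_norm (f : X →L[ℝ] ℝ) (y : Y) : |gl hX f y| ≤ ‖f‖ * ‖y‖ := by
  by_contra hcon
  push_neg at hcon
  set η := (|gl hX f y| - ‖f‖ * ‖y‖) / 2 with hη
  have hηpos : 0 < η := by rw [hη]; linarith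
  have hev : ∀ᶠ p in (idxU Y : Filter _), |uf hX f y p| ≤ ‖f‖ * ‖y‖ + η := by
    filter_upwards [uf_bound hX f y,
      ev_eps Y (c := η / (‖f‖ * ‖y‖ + 1)) (by positivity)] with p h1 h2
    have h3 : eps Y p * (‖f‖ * ‖y‖) ≤ eps Y p * (‖f‖ * ‖y‖ + 1) :=
      mul_le_mul_of_nonneg_left (by linarith) (le_of_lt (eps_pos Y p))
    have h4 : eps Y p * (‖f‖ * ‖y‖ + 1) < η := by
      rw [div_eq_inv_mul] at h2
      have h5 : (0:ℝ) < ‖f‖ * ‖y‖ + 1 := by positivity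
      calc eps Y p * (‖f‖ * ‖y‖ + 1) < (‖f‖ * ‖y‖ + 1)⁻¹ * η * (‖f‖ * ‖y‖ + 1) := by
            apply mul_lt_mul_of_pos_right _ h5
            rw [mul_comm (‖f‖ * ‖y‖ + 1)⁻¹ η] at h2 ⊢
            exact h2
        _ = η := by field_simp
    nlinarith [eps_pos Y p]
  have := le_of_tendsto (gl_spec hX f y).abs hev
  linarith

lemma gl_mem (f : X →L[ℝ] ℝ) (x : Y) (hx : x ∈ X) : gl hX f x = f ⟨x, hx⟩ := by
  refine tendsto_nhds_unique (gl_spec hX f x) ?_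
  refine tendsto_const_nhds.congr' ?_
  filter_upwards [ev_mem Y x] with p hp
  have h1 : Tp hX p ⟨x, hp⟩ = ⟨x, hx⟩ := Subtype.ext (Tp_fix hX p ⟨x, hp⟩ hx)
  simp only [uf, dif_pos hp, h1]

noncomputable def glL (f : X →L[ℝ] ℝ) : Y →L[ℝ] ℝ :=
  LinearMap.mkContinuous
    { toFun := gl hX f
      map_add' := gl_add hX f
      map_smul' := fun c y => by simp [gl_smul hX f c y] }
    ‖f‖ (fun y => by rw [Real.norm_eq_abs]; exact gl_norm hX f y)

lemma glL_apply (f : X →L[ℝ] ℝ) (y : Y) : glL hX f y = gl hX f y := rfl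


end SuperIdealProof

set_option maxHeartbeats 1000000 in
theorem superIdeal_diameterTwoProperty
    (Y : Type*) [NormedAddCommGroup Y] [NormedSpace ℝ Y] [CompleteSpace Y]
    (X : Subspace ℝ Y) (hXc : IsClosed (X : Set Y)) (hX : IsSuperIdeal X)
    (hY : HasDiameterTwoProperty Y) :
    HasDiameterTwoProperty X := by
  classical
  intro U hUne hUw
  obtain ⟨V, hV, hUeq⟩ := hUw
  obtain ⟨x₀, hx₀U⟩ := hUne
  have hx₀VB : x₀ ∈ V ∩ closedBall (0 : X) 1 := by
    have := hx₀U; rwa [hUeq] at this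
  have hx₀V : x₀ ∈ V := hx₀VB.1
  have hx₀B : ‖x₀‖ ≤ 1 := by
    have := hx₀VB.2
    rwa [mem_closedBall, dist_zero_right] at this
  obtain ⟨I, α, hα, hsub⟩ := SuperIdealProof.weak_nbhd hV hx₀V
  have hUsub : U ⊆ closedBall (0 : X) 1 := by rw [hUeq]; exact inter_subset_right
  have hUbdd : Bornology.IsBounded U := Metric.isBounded_closedBall.subset hUsub
  have hle : Metric.diam U ≤ 2 := by
    calc Metric.diam U ≤ Metric.diam (closedBall (0:X) 1) :=
          Metric.diam_mono hUsub Metric.isBounded_closedBall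
      _ ≤ 2 * 1 := Metric.diam_closedBall zero_le_one
      _ = 2 := by norm_num
  refine le_antisymm hle (le_of_forall_lt fun c hc => ?_)
  set δ : ℝ := min (2 - c) 1 with hδdef
  have hδpos : 0 < δ := lt_min (by linarith) one_pos
  have hδ1 : δ ≤ 1 := min_le_right _ _
  have hδc : c ≤ 2 - δ := by
    have h := min_le_left (2 - c) 1
    rw [hδdef]; linarith [min_le_left (2 - c) 1]
  set M : ℝ := 1 + ∑ f ∈ I, ‖f‖ with hMdef
  have hM1 : 1 ≤ M := by
    have h : 0 ≤ ∑ f ∈ I, ‖f‖ := Finset.sum_nonneg fun f _ => norm_nonneg f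
    rw [hMdef]; linarith
  have hMpos : 0 < M := by linarith
  have hMf : ∀ f ∈ I, ‖f‖ ≤ M := fun f hf => by
    have h := Finset.single_le_sum (f := fun g : ↥X →L[ℝ] ℝ => ‖g‖)
      (fun g _ => norm_nonneg g) hf
    rw [hMdef]; linarith
  set β : ℝ := α / 4 with hβdef
  have hβpos : 0 < β := by rw [hβdef]; positivity
  set ε₀ : ℝ := min (α / (4 * M)) (δ / 100) with hε₀def
  have hε₀pos : 0 < ε₀ := lt_min (by positivity) (by positivity)
  set W : Set Y := {y : Y | ∀ f ∈ I, |SuperIdealProof.glL hX f y - f x₀| < β} with hWdef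
  have hWopen : @IsOpen (WeakSpace ℝ Y) _ W :=
    SuperIdealProof.weak_open_set' I (fun f => SuperIdealProof.glL hX f) (fun f => f x₀) β
  have hx₀W : (x₀ : Y) ∈ W := by
    intro f hf
    rw [SuperIdealProof.glL_apply, SuperIdealProof.gl_mem hX f _ x₀.2]
    simpa using hβpos
  have hYd := hY (W ∩ closedBall (0:Y) 1)
    ⟨(x₀ : Y), hx₀W, by simpa [mem_closedBall, dist_zero_right] using hx₀B⟩
    ⟨W, hWopen, rfl⟩
  obtain ⟨y₁, hy₁, y₂, hy₂, hyd⟩ :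
      ∃ y₁ ∈ W ∩ closedBall (0:Y) 1, ∃ y₂ ∈ W ∩ closedBall (0:Y) 1,
        2 - δ/2 < dist y₁ y₂ := by
    by_contra hcon
    push_neg at hcon
    have hd2 : Metric.diam (W ∩ closedBall (0:Y) 1) ≤ 2 - δ/2 :=
      Metric.diam_le_of_forall_dist_le (by linarith) fun a ha b hb => hcon a ha b hb
    rw [hYd] at hd2
    linarith
  have hy₁n : ‖y₁‖ ≤ 1 := by
    have := hy₁.2; rwa [mem_closedBall, dist_zero_right] at this
  have hy₂n : ‖y₂‖ ≤ 1 := by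
    have := hy₂.2; rwa [mem_closedBall, dist_zero_right] at this
  have h4 : ∀ᶠ p in (SuperIdealProof.idxU Y : Filter _),
      ∀ f ∈ I, |SuperIdealProof.uf hX f y₁ p - SuperIdealProof.gl hX f y₁| < β := by
    rw [Filter.eventually_all_finset]
    intro f hf
    have h := SuperIdealProof.gl_spec hX f y₁
    rw [Metric.tendsto_nhds] at h
    simpa [Real.dist_eq] using h β hβpos
  have h5 : ∀ᶠ p in (SuperIdealProof.idxU Y : Filter _),
      ∀ f ∈ I, |SuperIdealProof.uf hX f y₂ p - SuperIdealProof.gl hX f y₂| < β := by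
    rw [Filter.eventually_all_finset]
    intro f hf
    have h := SuperIdealProof.gl_spec hX f y₂
    rw [Metric.tendsto_nhds] at h
    simpa [Real.dist_eq] using h β hβpos
  obtain ⟨p, ⟨hpy₁, hpy₂⟩, hpε, hpb₁, hpb₂⟩ :=
    (((SuperIdealProof.ev_mem Y y₁).and (SuperIdealProof.ev_mem Y y₂)).and
      ((SuperIdealProof.ev_eps Y hε₀pos).and (h4.and h5))).exists
  set ε := SuperIdealProof.eps Y p with hεdef
  have hεpos : 0 < ε := SuperIdealProof.eps_pos Y p
  have hε1 : ε ≤ 1 := SuperIdealProof.eps_le_one Y p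
  have h1ε : (0:ℝ) < 1 + ε := by linarith
  have hεα : ε ≤ α / (4 * M) := le_trans hpε.le (min_le_left _ _)
  have hεδ : ε ≤ δ / 100 := le_trans hpε.le (min_le_right _ _)
  have hi : (1+ε)⁻¹ * (1+ε) = 1 := inv_mul_cancel₀ (ne_of_gt h1ε)
  have hipos : 0 < (1+ε)⁻¹ := inv_pos.mpr h1ε
  have key : ∀ (yy : Y), yy ∈ W → ‖yy‖ ≤ 1 → ∀ (hyE : yy ∈ SuperIdealProof.Esp Y p),
      (∀ f ∈ I, |SuperIdealProof.uf hX f yy p - SuperIdealProof.gl hX f yy| < β) →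
      ((1 + ε)⁻¹ • (SuperIdealProof.Tp hX p ⟨yy, hyE⟩) : ↥X) ∈ U := by
    intro yy hyW hyn hyE hyb
    set t := SuperIdealProof.Tp hX p ⟨yy, hyE⟩ with htdef
    have hnorme : ‖(⟨yy, hyE⟩ : SuperIdealProof.Esp Y p)‖ = ‖yy‖ := rfl
    have htn : ‖t‖ ≤ (1 + ε) * ‖yy‖ := by
      have h := (SuperIdealProof.Tp_norm hX p ⟨yy, hyE⟩).2
      rwa [hnorme] at h
    have hun : ‖((1 + ε)⁻¹ • t : ↥X)‖ ≤ 1 := by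
      rw [norm_smul, Real.norm_eq_abs, abs_of_pos hipos]
      calc (1+ε)⁻¹ * ‖t‖ ≤ (1+ε)⁻¹ * ((1+ε) * ‖yy‖) :=
            mul_le_mul_of_nonneg_left htn (le_of_lt hipos)
        _ = ((1+ε)⁻¹ * (1+ε)) * ‖yy‖ := by ring
        _ = ‖yy‖ := by rw [hi, one_mul]
        _ ≤ 1 := hyn
    rw [hUeq]
    refine ⟨hsub ?_, by rwa [mem_closedBall, dist_zero_right]⟩
    intro f hf
    have hA : |f t - SuperIdealProof.gl hX f yy| < β := by
      have h := hyb f hf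
      rwa [show SuperIdealProof.uf hX f yy p = f t from by
        rw [SuperIdealProof.uf, dif_pos hyE]] at h
    have hB : |SuperIdealProof.gl hX f yy - f x₀| < β := hyW f hf
    have hft : |f t| ≤ 2 * M := by
      calc |f t| ≤ ‖f‖ * ‖t‖ := by rw [← Real.norm_eq_abs]; exact f.le_opNorm t
        _ ≤ M * ((1+ε)*‖yy‖) := mul_le_mul (hMf f hf) htn (norm_nonneg t) (by linarith)
        _ ≤ M * 2 := by
            have h8 : (1+ε)*‖yy‖ ≤ 2 := by
              nlinarith [mul_le_mul_of_nonneg_left hyn (le_of_lt h1ε)]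
            exact mul_le_mul_of_nonneg_left h8 (by linarith)
        _ = 2 * M := by ring
    have hC : |f ((1+ε)⁻¹ • t) - f t| ≤ ε * (2 * M) := by
      have hsplit : (1+ε)⁻¹ * f t - f t = ((1+ε)⁻¹ - 1) * f t := by ring
      rw [map_smul, smul_eq_mul, hsplit, abs_mul]
      have h6 : |(1+ε)⁻¹ - 1| = 1 - (1+ε)⁻¹ := by
        rw [abs_of_nonpos (by nlinarith)]; ring
      rw [h6]
      have h7 : 1 - (1+ε)⁻¹ ≤ ε := by nlinarith
      exact mul_le_mul h7 hft (abs_nonneg _) (le_of_lt hεpos)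
    have hfin : ε * (2 * M) ≤ α / 2 := by
      have : ε * (2 * M) ≤ (α / (4 * M)) * (2 * M) :=
        mul_le_mul_of_nonneg_right hεα (by linarith)
      calc ε * (2 * M) ≤ (α / (4 * M)) * (2 * M) := this
        _ = α / 2 := by field_simp; ring
    calc |f ((1+ε)⁻¹ • t) - f x₀|
        ≤ |f ((1+ε)⁻¹ • t) - f t| + |f t - f x₀| := abs_sub_le _ _ _
      _ ≤ |f ((1+ε)⁻¹ • t) - f t|
          + (|f t - SuperIdealProof.gl hX f yy| + |SuperIdealProof.gl hX f yy - f x₀|) := by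
            linarith [abs_sub_le (f t) (SuperIdealProof.gl hX f yy) (f x₀)]
      _ < α / 2 + (β + β) := by
            have := add_lt_add hA hB
            linarith [hC, hfin]
      _ ≤ α := by rw [hβdef]; linarith
  have hu₁U := key y₁ hy₁.1 hy₁n hpy₁ hpb₁
  have hu₂U := key y₂ hy₂.1 hy₂n hpy₂ hpb₂
  set e₁ : SuperIdealProof.Esp Y p := ⟨y₁, hpy₁⟩ with he₁
  set e₂ : SuperIdealProof.Esp Y p := ⟨y₂, hpy₂⟩ with he₂
  set u₁ : ↥X := (1 + ε)⁻¹ • (SuperIdealProof.Tp hX p e₁) with hu₁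
  set u₂ : ↥X := (1 + ε)⁻¹ • (SuperIdealProof.Tp hX p e₂) with hu₂
  have hyd' : 2 - δ/2 < ‖y₁ - y₂‖ := by rwa [dist_eq_norm] at hyd
  have hesub : ‖e₁ - e₂‖ = ‖y₁ - y₂‖ := by
    have h : ((e₁ - e₂ : SuperIdealProof.Esp Y p) : Y) = y₁ - y₂ := by
      simp [he₁, he₂]
    show ‖((e₁ - e₂ : SuperIdealProof.Esp Y p) : Y)‖ = ‖y₁ - y₂‖
    rw [h]
  have hTlow : (1+ε)⁻¹ * ‖y₁ - y₂‖
      ≤ ‖SuperIdealProof.Tp hX p e₁ - SuperIdealProof.Tp hX p e₂‖ := by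
    rw [← map_sub]
    have h := (SuperIdealProof.Tp_norm hX p (e₁ - e₂)).1
    rwa [hesub] at h
  have hdd : (1+ε)⁻¹ * ((1+ε)⁻¹ * ‖y₁ - y₂‖) ≤ dist u₁ u₂ := by
    rw [dist_eq_norm, hu₁, hu₂, ← smul_sub, norm_smul, Real.norm_eq_abs,
      abs_of_pos hipos]
    exact mul_le_mul_of_nonneg_left hTlow (le_of_lt hipos)
  have htlb : 1 - ε ≤ (1+ε)⁻¹ := by nlinarith
  have h1me : (0:ℝ) ≤ 1 - ε := by
    have : ε ≤ δ / 100 := hεδ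
    linarith
  have htt : (1-ε)*(1-ε) ≤ (1+ε)⁻¹*(1+ε)⁻¹ :=
    mul_le_mul htlb htlb h1me (le_of_lt hipos)
  have hstep : (1-ε)*(1-ε)*(2-δ/2) ≤ (1+ε)⁻¹*(1+ε)⁻¹*‖y₁ - y₂‖ :=
    mul_le_mul htt (le_of_lt hyd') (by linarith) (mul_nonneg (le_of_lt hipos) (le_of_lt hipos))
  have hpoly : 2 - δ < (1-ε)*(1-ε)*(2-δ/2) := by
    nlinarith [mul_nonneg hεpos.le hδpos.le, mul_nonneg hεpos.le hεpos.le,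
      mul_le_mul_of_nonneg_left hδ1 (mul_nonneg hεpos.le hεpos.le), hδpos, hεδ, hδ1]
  have hcd : c < dist u₁ u₂ := by
    have h := Metric.dist_le_diam_of_mem hUbdd hu₁U hu₂U
    calc c ≤ 2 - δ := hδc
      _ < (1-ε)*(1-ε)*(2-δ/2) := hpoly
      _ ≤ (1+ε)⁻¹*(1+ε)⁻¹*‖y₁ - y₂‖ := hstep
      _ = (1+ε)⁻¹*((1+ε)⁻¹*‖y₁ - y₂‖) := by ring
      _ ≤ dist u₁ u₂ := hdd
  calc c < dist u₁ u₂ := hcd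
    _ ≤ Metric.diam U := Metric.dist_le_diam_of_mem hUbdd hu₁U hu₂U
end

section
/- Let X be a closed subspace of a Banach space Y such that X is a super-ideal in Y. If Y has the strong diameter 2 property (every finite convex combination of slices of the closed unit ball B_Y has diameter 2), then X has the strong diameter 2 property. -/
universe u v

open Metric Set

section AuxiliaryLemmas

open Filter

lemma exists_near_norm {X : Type*} [NormedAddCommGroup X] [NormedSpace ℝ X]
    (f : X →L[ℝ] ℝ) (hf : ‖f‖ = 1) {θ : ℝ} (hθ : 0 < θ) :
    ∃ x : X, ‖x‖ ≤ 1 ∧ 1 - θ < f x := by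
  have h : (1 - θ : ℝ) < ‖f‖ := by rw [hf]; linarith
  obtain ⟨x, hx1, hx2⟩ := f.exists_lt_apply_of_lt_opNorm h
  rw [Real.norm_eq_abs] at hx2
  rcases le_or_gt 0 (f x) with h0 | h0
  · exact ⟨x, le_of_lt hx1, by rwa [abs_of_nonneg h0] at hx2⟩
  · refine ⟨-x, le_of_lt (by rwa [norm_neg]), ?_⟩
    rw [map_neg]
    rwa [abs_of_neg h0] at hx2

lemma aux_G {Y : Type*} [NormedAddCommGroup Y] [NormedSpace ℝ Y]
    {X : Subspace ℝ Y} (hX : IsSuperIdeal X) {n : ℕ}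
    (f : Fin n → (X →L[ℝ] ℝ)) (hf : ∀ i, ‖f i‖ ≤ 1)
    (x0 : Fin n → X) :
    ∃ G : Fin n → (Y →L[ℝ] ℝ),
      (∀ i, ‖G i‖ ≤ 1) ∧
      (∀ i j, G i ((x0 j : Y)) = f i (x0 j)) ∧
      (∀ (P : Finset Y) (τ : ℝ), 0 < τ → ∀ k : ℕ,
        ∃ (E : Subspace ℝ Y) (T : E →ₗ[ℝ] X) (ε' : ℝ),
          0 < ε' ∧ ε' ≤ 1/((k:ℝ)+1) ∧ (↑P : Set Y) ⊆ (E : Set Y) ∧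
          (∀ e : E, (1+ε')⁻¹ * ‖e‖ ≤ ‖T e‖ ∧ ‖T e‖ ≤ (1+ε') * ‖e‖) ∧
          (∀ (i : Fin n) (e : E), (e : Y) ∈ P → |f i (T e) - G i (e : Y)| ≤ τ)) := by
  classical
  set X0 : Set Y := Set.range (fun j => (x0 j : Y)) with hX0
  have hX0fin : X0.Finite := Set.finite_range _
  set Esp : Finset Y × ℕ → Subspace ℝ Y :=
    (fun α => Submodule.span ℝ ((↑α.1 : Set Y) ∪ X0)) with hEsp
  have hEfin : ∀ α, FiniteDimensional ℝ (Esp α) := fun α =>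
    FiniteDimensional.span_of_finite ℝ ((α.1.finite_toSet).union hX0fin)
  have hexT : ∀ α : Finset Y × ℕ, ∃ T : Esp α →ₗ[ℝ] X,
      (∀ e : Esp α, (e : Y) ∈ X → ((T e : X) : Y) = (e : Y)) ∧
      (∀ e : Esp α, (1+(1/((α.2:ℝ)+1)))⁻¹ * ‖e‖ ≤ ‖T e‖ ∧
        ‖T e‖ ≤ (1+(1/((α.2:ℝ)+1))) * ‖e‖) := by
    intro α
    exact hX (1/((α.2:ℝ)+1)) (by positivity) (Esp α) (hEfin α)
  choose T hTfix hTb using hexT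
  have hexH : ∀ (α : Finset Y × ℕ) (i : Fin n), ∃ H : Y →L[ℝ] ℝ,
      (∀ e : Esp α, H (e : Y) = f i (T α e)) ∧ ‖H‖ ≤ 1 + 1/((α.2:ℝ)+1) := by
    intro α i
    have hc : ∀ e : Esp α, ‖((f i).toLinearMap.comp (T α)) e‖ ≤ (1 + 1/((α.2:ℝ)+1)) * ‖e‖ := by
      intro e
      have h1 : ‖f i (T α e)‖ ≤ ‖f i‖ * ‖T α e‖ := (f i).le_opNorm _
      have h2 := (hTb α e).2
      have h3 : ‖f i‖ * ‖T α e‖ ≤ 1 * ((1 + 1/((α.2:ℝ)+1)) * ‖e‖) :=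
        mul_le_mul (hf i) h2 (norm_nonneg _) zero_le_one
      calc ‖((f i).toLinearMap.comp (T α)) e‖ = ‖f i (T α e)‖ := rfl
        _ ≤ 1 * ((1 + 1/((α.2:ℝ)+1)) * ‖e‖) := le_trans h1 h3
        _ = (1 + 1/((α.2:ℝ)+1)) * ‖e‖ := one_mul _
    obtain ⟨g, hg1, hg2⟩ := exists_extension_norm_eq (Esp α)
      (LinearMap.mkContinuous _ _ hc)
    refine ⟨g, fun e => by rw [hg1 e]; rfl, ?_⟩
    rw [hg2]
    exact LinearMap.mkContinuous_norm_le _ (by positivity) _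
  choose H hHext hHnorm using hexH
  have hinv1 : ∀ α : Finset Y × ℕ, (1:ℝ)/((α.2:ℝ)+1) ≤ 1 := by
    intro α
    rw [div_le_one (by positivity)]
    linarith [show (0:ℝ) ≤ (α.2:ℝ) from Nat.cast_nonneg _]
  haveI : Nonempty (Finset Y × ℕ) := ⟨(∅, 0)⟩
  obtain ⟨𝒰, h𝒰⟩ := Ultrafilter.exists_le (atTop : Filter (Finset Y × ℕ))
  have hlim : ∀ (i : Fin n) (y : Y), ∃ r : ℝ, Tendsto (fun α => H α i y) 𝒰 (nhds r) := by
    intro i y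
    have hmem : ∀ α, H α i y ∈ Set.Icc (-(2*‖y‖)) (2*‖y‖) := by
      intro α
      have h1 : |H α i y| ≤ 2 * ‖y‖ := by
        calc |H α i y| ≤ ‖H α i‖ * ‖y‖ := (H α i).le_opNorm y
          _ ≤ 2 * ‖y‖ := by
            apply mul_le_mul_of_nonneg_right _ (norm_nonneg _)
            linarith [hHnorm α i, hinv1 α]
      exact abs_le.mp h1
    obtain ⟨r, _, hr⟩ := (isCompact_Icc (a := -(2*‖y‖)) (b := 2*‖y‖)).ultrafilter_le_nhds
      (𝒰.map (fun α => H α i y))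
      (by
        rw [Ultrafilter.coe_map, Filter.le_principal_iff, Filter.mem_map]
        exact Filter.univ_mem' hmem)
    refine ⟨r, ?_⟩
    rwa [Ultrafilter.coe_map] at hr
  choose gf hgf using hlim
  have hadd : ∀ i y z, gf i (y+z) = gf i y + gf i z := by
    intro i y z
    refine tendsto_nhds_unique (f := fun α => H α i y + H α i z) (l := (𝒰 : Filter _)) ?_
      ((hgf i y).add (hgf i z))
    have heq : (fun α => H α i y + H α i z) = fun α => H α i (y + z) := by
      funext α; rw [map_add]
    rw [heq]; exact hgf i (y+z)
  have hsmul : ∀ i (c : ℝ) y, gf i (c • y) = c * gf i y := by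
    intro i c y
    refine tendsto_nhds_unique (f := fun α => c * H α i y) (l := (𝒰 : Filter _)) ?_
      ((hgf i y).const_mul c)
    have heq : (fun α => c * H α i y) = fun α => H α i (c • y) := by
      funext α; rw [map_smul]; simp
    rw [heq]; exact hgf i (c • y)
  have hb1 : ∀ (i : Fin n) (y : Y) (m : ℕ), |gf i y| ≤ (1 + 1/((m:ℝ)+1)) * ‖y‖ := by
    intro i y m
    have hev : ∀ᶠ α in (𝒰 : Filter _), |H α i y| ≤ (1 + 1/((m:ℝ)+1)) * ‖y‖ := by
      apply h𝒰
      filter_upwards [Filter.eventually_ge_atTop ((∅ : Finset Y), m)] with α hα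
      have h2 : (m:ℝ)+1 ≤ (α.2:ℝ)+1 := by
        have h2' : (m:ℝ) ≤ (α.2:ℝ) := by exact_mod_cast hα.2
        linarith
      have h3 : (1:ℝ)/((α.2:ℝ)+1) ≤ 1/((m:ℝ)+1) :=
        one_div_le_one_div_of_le (by positivity) h2
      calc |H α i y| ≤ ‖H α i‖ * ‖y‖ := (H α i).le_opNorm y
        _ ≤ (1 + 1/((m:ℝ)+1)) * ‖y‖ :=
          mul_le_mul_of_nonneg_right (by linarith [hHnorm α i]) (norm_nonneg _)
    exact le_of_tendsto ((hgf i y).abs) hev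
  have hb : ∀ (i : Fin n) (y : Y), |gf i y| ≤ ‖y‖ := by
    intro i y
    by_contra hcon
    push_neg at hcon
    have hy : (0:ℝ) < ‖y‖ + 1 := by positivity
    obtain ⟨m, hm⟩ := exists_nat_one_div_lt
      (show (0:ℝ) < (|gf i y| - ‖y‖)/(‖y‖+1) from div_pos (by linarith) hy)
    rw [lt_div_iff₀ hy] at hm
    have h1 := hb1 i y m
    have h2 : (0:ℝ) < 1/((m:ℝ)+1) := by positivity
    nlinarith [norm_nonneg y]
  let gl : Fin n → Y →ₗ[ℝ] ℝ := fun i =>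
    { toFun := gf i
      map_add' := hadd i
      map_smul' := hsmul i }
  have hglb : ∀ (i : Fin n) (y : Y), ‖gl i y‖ ≤ 1 * ‖y‖ := by
    intro i y
    rw [one_mul]
    exact (Real.norm_eq_abs _) ▸ hb i y
  let G : Fin n → Y →L[ℝ] ℝ := fun i => LinearMap.mkContinuous (gl i) 1 (hglb i)
  have hGapp : ∀ (i : Fin n) (y : Y), G i y = gf i y := fun _ _ => rfl
  refine ⟨G, fun i => LinearMap.mkContinuous_norm_le _ zero_le_one _, ?_, ?_⟩
  · intro i j
    have hmem : ∀ α, ((x0 j : Y)) ∈ Esp α := fun α =>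
      Submodule.subset_span (Or.inr ⟨j, rfl⟩)
    have hconst : ∀ α, H α i ((x0 j : Y)) = f i (x0 j) := by
      intro α
      have h1 := hHext α i ⟨(x0 j : Y), hmem α⟩
      have h2 : T α ⟨(x0 j : Y), hmem α⟩ = x0 j :=
        Subtype.ext (hTfix α ⟨(x0 j : Y), hmem α⟩ (x0 j).2)
      rw [show H α i ((x0 j : Y)) = H α i ((⟨(x0 j : Y), hmem α⟩ : Esp α) : Y) from rfl,
        h1, h2]
    rw [hGapp]
    refine tendsto_nhds_unique (hgf i _) ?_
    rw [show (fun α => H α i ((x0 j : Y))) = fun _ => f i (x0 j) from funext hconst]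
    exact tendsto_const_nhds
  · intro P τ hτ k
    have hev2 : ∀ᶠ α in (𝒰 : Filter _), ∀ i : Fin n, ∀ y ∈ P, |H α i y - gf i y| ≤ τ := by
      rw [Filter.eventually_all]
      intro i
      rw [Filter.eventually_all_finset]
      intro y hy
      have h2 : ∀ᶠ α in (𝒰 : Filter _), dist (H α i y) (gf i y) < τ :=
        Metric.tendsto_nhds.mp (hgf i y) τ hτ
      filter_upwards [h2] with α hα
      rw [Real.dist_eq] at hα; exact le_of_lt hα
    have hev1 : ∀ᶠ α in (𝒰 : Filter _), (P, k) ≤ α := h𝒰 (Filter.eventually_ge_atTop _)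
    obtain ⟨α, hα1, hα2⟩ := (hev1.and hev2).exists
    refine ⟨Esp α, T α, 1/((α.2:ℝ)+1), by positivity, ?_, ?_, hTb α, ?_⟩
    · apply one_div_le_one_div_of_le (by positivity)
      have h4 : (k:ℝ) ≤ (α.2:ℝ) := by exact_mod_cast hα1.2
      linarith
    · intro y hy
      exact Submodule.subset_span (Or.inl (hα1.1 hy))
    · intro i e he
      have h3 := hα2 i (e : Y) he
      rw [hHext α i e] at h3
      rw [hGapp]
      exact h3

end AuxiliaryLemmas


set_option maxHeartbeats 1600000 in
theorem superIdeal_strongDiameterTwoProperty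
    (Y : Type*) [NormedAddCommGroup Y] [NormedSpace ℝ Y] [CompleteSpace Y]
    (X : Subspace ℝ Y) (hXc : IsClosed (X : Set Y)) (hX : IsSuperIdeal X)
    (hY : HasStrongDiameterTwoProperty Y) :
    HasStrongDiameterTwoProperty X := by
  intro n hn S lam hS hlam hsum
  classical
  choose f eps hfnorm heps hSeq using hS
  set D : Set X := {z : X | ∃ x : Fin n → X, (∀ i, x i ∈ S i) ∧ z = ∑ i, lam i • x i}
    with hD
  have hDball : D ⊆ closedBall (0 : X) 1 := by
    rintro z ⟨x, hx, rfl⟩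
    rw [mem_closedBall_zero_iff]
    calc ‖∑ i, lam i • x i‖ ≤ ∑ i, ‖lam i • x i‖ := norm_sum_le _ _
      _ ≤ ∑ i, lam i := by
        apply Finset.sum_le_sum
        intro i _
        rw [norm_smul, Real.norm_eq_abs, abs_of_nonneg (hlam i)]
        have hxb : ‖x i‖ ≤ 1 := by
          have h := hx i
          rw [hSeq i] at h
          exact mem_closedBall_zero_iff.mp h.1
        nlinarith [hlam i]
      _ = 1 := hsum
  have hDbd : Bornology.IsBounded D := (Metric.isBounded_closedBall).subset hDball
  apply le_antisymm
  · apply Metric.diam_le_of_forall_dist_le (by norm_num)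
    intro p hp q hq
    have hp1 := mem_closedBall_zero_iff.mp (hDball hp)
    have hq1 := mem_closedBall_zero_iff.mp (hDball hq)
    calc dist p q ≤ ‖p‖ + ‖q‖ := dist_le_norm_add_norm p q
      _ ≤ 2 := by linarith
  · apply le_of_forall_pos_le_add
    intro δ hδ
    have hne : (Finset.univ : Finset (Fin n)).Nonempty := ⟨⟨0, hn⟩, Finset.mem_univ _⟩
    set ε₀ : ℝ := Finset.univ.inf' hne eps with hε₀
    have hε₀pos : 0 < ε₀ := by
      rw [hε₀, Finset.lt_inf'_iff]
      exact fun i _ => heps i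
    have hε₀le : ∀ i, ε₀ ≤ eps i := fun i => Finset.inf'_le _ (Finset.mem_univ i)
    set r : ℝ := min ε₀ (min δ 1) / 10 with hr
    have hrpos : 0 < r := by
      rw [hr]
      have : 0 < min ε₀ (min δ 1) := lt_min hε₀pos (lt_min hδ one_pos)
      positivity
    have hr1 : 10 * r ≤ 1 := by
      rw [hr]
      have : min ε₀ (min δ 1) ≤ 1 := le_trans (min_le_right _ _) (min_le_right _ _)
      linarith
    have hrε : 10 * r ≤ ε₀ := by
      rw [hr]; linarith [min_le_left ε₀ (min δ 1)]
    have hrδ : 10 * r ≤ δ := by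
      rw [hr]
      linarith [le_trans (min_le_right ε₀ (min δ 1)) (min_le_left δ 1)]
    -- auxiliary points of X almost norming the functionals
    have hx0ex : ∀ i, ∃ x : X, ‖x‖ ≤ 1 ∧ 1 - r < f i x := fun i =>
      exists_near_norm (f i) (hfnorm i) hrpos
    choose x0 hx0norm hx0val using hx0ex
    obtain ⟨G, hG1, hG2, hG3⟩ := aux_G hX f (fun i => le_of_eq (hfnorm i)) x0
    have hGlow : ∀ i, 1 - r ≤ ‖G i‖ := by
      intro i
      have h1 : 1 - r < f i (x0 i) := hx0val i
      have h2 : G i ((x0 i : Y)) = f i (x0 i) := hG2 i i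
      have h3 : |G i ((x0 i : Y))| ≤ ‖G i‖ * ‖(x0 i : Y)‖ := by
        rw [← Real.norm_eq_abs]; exact (G i).le_opNorm _
      have h4 : ‖(x0 i : Y)‖ ≤ 1 := hx0norm i
      have h5 : ‖G i‖ * ‖(x0 i : Y)‖ ≤ ‖G i‖ * 1 :=
        mul_le_mul_of_nonneg_left h4 (norm_nonneg _)
      have h6 : f i (x0 i) ≤ |G i ((x0 i : Y))| := h2 ▸ le_abs_self _
      nlinarith
    have hGpos : ∀ i, (0:ℝ) < ‖G i‖ := fun i => lt_of_lt_of_le (by linarith [hr1, hrpos]) (hGlow i)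
    set g : Fin n → Y →L[ℝ] ℝ := fun i => ‖G i‖⁻¹ • G i with hg
    have hgapp : ∀ i y, g i y = ‖G i‖⁻¹ * G i y := fun i y => rfl
    have hgnorm : ∀ i, ‖g i‖ = 1 := by
      intro i
      have hns := norm_smul (‖G i‖⁻¹) (G i)
      rw [Real.norm_eq_abs, abs_inv, abs_of_nonneg (norm_nonneg (G i))] at hns
      rw [show g i = ‖G i‖⁻¹ • G i from rfl, hns]
      exact inv_mul_cancel₀ (ne_of_gt (hGpos i))
    set SY : Fin n → Set Y := fun i => {z | z ∈ closedBall (0:Y) 1 ∧ 1 - r < g i z} with hSY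
    have hSYslice : ∀ i, IsSlice Y (SY i) := fun i => ⟨g i, r, hgnorm i, hrpos, rfl⟩
    set DY : Set Y := {z : Y | ∃ x : Fin n → Y, (∀ i, x i ∈ SY i) ∧ z = ∑ i, lam i • x i}
      with hDY
    have hdY : Metric.diam DY = 2 := hY n hn SY lam hSYslice hlam hsum
    have hpair : ∃ p ∈ DY, ∃ q ∈ DY, 2 - r < dist p q := by
      by_contra hcon
      push_neg at hcon
      have hle := Metric.diam_le_of_forall_dist_le (C := 2 - r)
        (by linarith [hr1, hrpos]) hcon
      rw [hdY] at hle
      linarith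
    obtain ⟨p, ⟨ys, hys, rfl⟩, q, ⟨ys', hys', rfl⟩, hpq⟩ := hpair
    obtain ⟨k₁, hk₁⟩ := exists_nat_one_div_lt hrpos
    set P : Finset Y := (Finset.image ys Finset.univ) ∪ (Finset.image ys' Finset.univ)
      with hP
    obtain ⟨E, T, ε', hε'pos, hε'le, hPE, hTb, hcompat⟩ := hG3 P r hrpos k₁
    have hε'r : ε' < r := lt_of_le_of_lt hε'le hk₁
    have h1ε' : (0:ℝ) < 1 + ε' := by linarith
    have hmemE : ∀ i, ys i ∈ E ∧ ys' i ∈ E := by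
      intro i
      constructor
      · exact hPE (Finset.mem_coe.mpr
          (Finset.mem_union_left _ (Finset.mem_image_of_mem ys (Finset.mem_univ i))))
      · exact hPE (Finset.mem_coe.mpr
          (Finset.mem_union_right _ (Finset.mem_image_of_mem ys' (Finset.mem_univ i))))
    have hmemP : ∀ i, ys i ∈ P ∧ ys' i ∈ P := by
      intro i
      exact ⟨Finset.mem_union_left _ (Finset.mem_image_of_mem ys (Finset.mem_univ i)),
        Finset.mem_union_right _ (Finset.mem_image_of_mem ys' (Finset.mem_univ i))⟩
    -- generic slice-transfer
    have hgen : ∀ (i : Fin n) (e : E), (e : Y) ∈ P → ‖(e:Y)‖ ≤ 1 → 1 - r < g i (e : Y) →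
        ((1+ε')⁻¹ • T e) ∈ S i := by
      intro i e heP heb hes
      have hcp := hcompat i e heP
      have hGg : G i (e : Y) = ‖G i‖ * g i (e : Y) := by
        rw [hgapp, ← mul_assoc, mul_inv_cancel₀ (ne_of_gt (hGpos i)), one_mul]
      have hGge : (1-r)*(1-r) ≤ G i (e : Y) := by
        rw [hGg]
        apply mul_le_mul (hGlow i) (le_of_lt hes) (by linarith [hr1, hrpos]) (norm_nonneg _)
      have hfT : (1-r)*(1-r) - r ≤ f i (T e) := by
        have := (abs_le.mp hcp).1
        linarith
      have key : (1+ε') * (1 - ε₀) < (1-r)*(1-r) - r := by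
        rcases le_or_gt ε₀ 1 with hc | hc
        · nlinarith [hε'pos, hε'r, hrpos, hrε, hr1, hε₀pos]
        · nlinarith [hε'pos, hε'r, hrpos, hrε, hr1, hε₀pos]
      have hlt : 1 - ε₀ < f i ((1+ε')⁻¹ • T e) := by
        have h7 : (1+ε') * (1 - ε₀) < f i (T e) := lt_of_lt_of_le key hfT
        have h8 := mul_lt_mul_of_pos_left h7 (inv_pos.mpr h1ε')
        rw [← mul_assoc, inv_mul_cancel₀ (ne_of_gt h1ε'), one_mul] at h8
        rw [map_smul]
        exact h8
      have hball : ‖(1+ε')⁻¹ • T e‖ ≤ 1 := by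
        have hns := norm_smul ((1+ε')⁻¹) (T e)
        rw [Real.norm_eq_abs, abs_of_pos (inv_pos.mpr h1ε')] at hns
        rw [hns]
        have h9 := (hTb e).2
        have h10 : ‖e‖ = ‖(e : Y)‖ := Submodule.coe_norm e
        have h11 : ‖T e‖ ≤ (1+ε') := by
          rw [h10] at h9
          nlinarith [heb, norm_nonneg (T e)]
        calc (1+ε')⁻¹ * ‖T e‖ ≤ (1+ε')⁻¹ * (1+ε') :=
          mul_le_mul_of_nonneg_left h11 (le_of_lt (inv_pos.mpr h1ε'))
          _ = 1 := inv_mul_cancel₀ (ne_of_gt h1ε')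
      rw [hSeq i]
      exact ⟨mem_closedBall_zero_iff.mpr hball, by linarith [hε₀le i]⟩
    set eY : Fin n → E := fun i => ⟨ys i, (hmemE i).1⟩ with heY
    set eY' : Fin n → E := fun i => ⟨ys' i, (hmemE i).2⟩ with heY'
    set x : Fin n → X := fun i => (1+ε')⁻¹ • T (eY i) with hxdef
    set x' : Fin n → X := fun i => (1+ε')⁻¹ • T (eY' i) with hx'def
    have hxS : ∀ i, x i ∈ S i := by
      intro i
      have h := hys i
      simp only [hSY, Set.mem_setOf_eq] at h
      exact hgen i (eY i) (hmemP i).1 (mem_closedBall_zero_iff.mp h.1) h.2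
    have hx'S : ∀ i, x' i ∈ S i := by
      intro i
      have h := hys' i
      simp only [hSY, Set.mem_setOf_eq] at h
      exact hgen i (eY' i) (hmemP i).2 (mem_closedBall_zero_iff.mp h.1) h.2
    set pX : X := ∑ i, lam i • x i with hpX
    set qX : X := ∑ i, lam i • x' i with hqX
    have hpXD : pX ∈ D := ⟨x, hxS, rfl⟩
    have hqXD : qX ∈ D := ⟨x', hx'S, rfl⟩
    set e0 : E := ∑ i, lam i • (eY i - eY' i) with he0
    have he0coe : (e0 : Y) = (∑ i, lam i • ys i) - ∑ i, lam i • ys' i := by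
      rw [he0]
      push_cast
      rw [← Finset.sum_sub_distrib]
      apply Finset.sum_congr rfl
      intro i _
      rw [smul_sub]
    have hdiff : pX - qX = (1+ε')⁻¹ • T e0 := by
      rw [he0, map_sum, Finset.smul_sum, hpX, hqX, ← Finset.sum_sub_distrib]
      apply Finset.sum_congr rfl
      intro i _
      rw [map_smul, map_sub, hxdef, hx'def]
      simp [smul_sub, smul_smul, mul_comm]
    have he0norm : 2 - r < ‖e0‖ := by
      have h1 : ‖e0‖ = ‖(e0 : Y)‖ := Submodule.coe_norm e0
      rw [h1, he0coe, ← dist_eq_norm]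
      exact hpq
    have hTe0 : (1+ε')⁻¹ * ((1+ε')⁻¹ * ‖e0‖) ≤ ‖pX - qX‖ := by
      have hns := norm_smul ((1+ε')⁻¹) (T e0)
      rw [Real.norm_eq_abs, abs_of_pos (inv_pos.mpr h1ε')] at hns
      rw [hdiff, hns]
      apply mul_le_mul_of_nonneg_left (hTb e0).1 (le_of_lt (inv_pos.mpr h1ε'))
    have key2 : (1+ε') * ((1+ε') * (2 - δ)) < 2 - r := by
      rcases le_or_gt δ 2 with hc | hc
      · have hA : (1+ε') ≤ 1 + r := by linarith
        have h2δ : (0:ℝ) ≤ 2 - δ := by linarith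
        have hin : (1+ε') * (2-δ) ≤ (1+r) * (2-δ) :=
          mul_le_mul_of_nonneg_right hA h2δ
        have hout : (1+ε') * ((1+ε') * (2-δ)) ≤ (1+r) * ((1+r) * (2-δ)) := by
          apply mul_le_mul hA hin (by positivity) (by linarith)
        have hpoly : (1+r) * ((1+r) * (2-δ)) < 2 - r := by
          nlinarith [hrδ, hr1, hrpos, mul_le_mul_of_nonneg_left hr1 hrpos.le,
            mul_nonneg hrpos.le (by linarith : (0:ℝ) ≤ δ),
            mul_nonneg (mul_nonneg hrpos.le hrpos.le) (by linarith : (0:ℝ) ≤ δ)]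
        linarith
      · have hin : (1+ε') * (2-δ) < 0 := mul_neg_of_pos_of_neg h1ε' (by linarith)
        have hout : (1+ε') * ((1+ε') * (2-δ)) < 0 := mul_neg_of_pos_of_neg h1ε' hin
        linarith
    have hfinal : 2 - δ < ‖pX - qX‖ := by
      have h5 : (1+ε')⁻¹ * ((1+ε')⁻¹ * ((1+ε') * ((1+ε') * (2-δ)))) = 2-δ := by
        field_simp
      have h6 := mul_lt_mul_of_pos_left key2 (inv_pos.mpr h1ε')
      have h7 := mul_lt_mul_of_pos_left h6 (inv_pos.mpr h1ε')
      rw [h5] at h7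
      have h8 : (1+ε')⁻¹ * ((1+ε')⁻¹ * (2 - r)) ≤ (1+ε')⁻¹ * ((1+ε')⁻¹ * ‖e0‖) := by
        have := le_of_lt he0norm
        have hpos := le_of_lt (inv_pos.mpr h1ε')
        apply mul_le_mul_of_nonneg_left (mul_le_mul_of_nonneg_left this hpos) hpos
      linarith
    have hdist : 2 - δ < dist pX qX := by
      rw [dist_eq_norm]
      exact hfinal
    have hdd := Metric.dist_le_diam_of_mem hDbd hpXD hqXD
    linarith
end
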